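/- arXiv:2603.14812 — 12 statements merged into one kernel-verified Lean document; each statement's English description precedes it below -/
import Mathlib

section
/- For all reals R > 0, Rs > 0 and F > 0, the value ηopt(R,Rs,F) lies in [0,1] and simultaneously minimizes both the upload latency and the required storage over the data-scheduling variable: for every η ∈ [0,1], T(R,Rs,F,ηopt(R,Rs,F)) ≤ T(R,Rs,F,η) and V(R,Rs,F,ηopt(R,Rs,F)) ≤ V(R,Rs,F,η); moreover T(R,Rs,F,ηopt(R,Rs,F)) = Topt(R,Rs,F) and V(R,Rs,F,ηopt(R,Rs,F)) = Vopt(R,Rs,F). -/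
noncomputable section

/-- Upload latency `T(R,Rs,F,η)`, defined piecewise (cases (i)-(v)). -/
def Tlat (D ρ ζ R Rs F η : ℝ) : ℝ :=
  if F / ρ ≤ η * R then
    if Rs ≤ ζ * F / ρ + (1 - η) * R then
      if η * Rs / (ζ * η + 1 - η) ≤ F / ρ then
        D * (ζ * η + 1 - η) / Rs            -- case (i)
      else
        η * D * ρ / F                        -- case (ii)
    else
      η * D * ρ / F                          -- case (iii)
  else
    if Rs ≤ (ζ * η + 1 - η) * R then
      D * (ζ * η + 1 - η) / Rs               -- case (iv)
    else
      D / R                                  -- case (v)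

/-- Required storage `V(R,Rs,F,η)`, defined piecewise (cases (i)-(v)). -/
def Vsto (D ρ ζ R Rs F η : ℝ) : ℝ :=
  if F / ρ ≤ η * R then
    if Rs ≤ ζ * F / ρ + (1 - η) * R then
      D * (R - Rs - (1 - ζ) * F / ρ) / R     -- cases (i),(ii)
    else
      D * (η * R - F / ρ) / R                -- case (iii)
  else
    if Rs ≤ (ζ * η + 1 - η) * R then
      D * ((ζ * η + 1 - η) * R - Rs) / R     -- case (iv)
    else
      0                                      -- case (v)

/-- Optimal data-scheduling variable `ηopt(R,Rs,F)`, defined by cases (1)-(6). -/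
def etaOpt (ρ ζ R Rs F : ℝ) : ℝ :=
  if R < Rs then 0
  else if R < Rs / ζ then
    if F / ρ < (R - Rs) / (1 - ζ) then F / (F * (1 - ζ) + ρ * Rs)
    else (R - Rs) / ((1 - ζ) * R)
  else
    if F / ρ < Rs / ζ then F / (F * (1 - ζ) + ρ * Rs)
    else 1

/-- Optimized latency `Topt(R,Rs,F)`, defined by cases (1)-(6). -/
def Topt (D ρ ζ R Rs F : ℝ) : ℝ :=
  if R < Rs then D / R
  else if R < Rs / ζ then
    if F / ρ < (R - Rs) / (1 - ζ) then D * ρ / (F * (1 - ζ) + ρ * Rs)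
    else D / R
  else
    if F / ρ < Rs / ζ then D * ρ / (F * (1 - ζ) + ρ * Rs)
    else ζ * D / Rs

/-- Optimized storage `Vopt(R,Rs,F)`, defined by cases (1)-(6). -/
def Vopt (D ρ ζ R Rs F : ℝ) : ℝ :=
  if R < Rs then 0
  else if R < Rs / ζ then
    if F / ρ < (R - Rs) / (1 - ζ) then D * (R - Rs - (1 - ζ) * F / ρ) / R
    else 0
  else
    if F / ρ < Rs / ζ then D * (R - Rs - (1 - ζ) * F / ρ) / R
    else if F / ρ < R then D * (R - Rs - (1 - ζ) * F / ρ) / R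
    else D * (ζ * R - Rs) / R

lemma T_ge_DR (D ρ ζ R Rs F η : ℝ) (hD : 0 < D) (hρ : 0 < ρ) (hζ0 : 0 < ζ) (hζ1 : ζ < 1)
    (hR : 0 < R) (hRs : 0 < Rs) (hF : 0 < F) (hη0 : 0 ≤ η) (hη1 : η ≤ 1) :
    D / R ≤ Tlat D ρ ζ R Rs F η := by
  have hρ0 : ρ ≠ 0 := hρ.ne'
  have hc : 0 < ζ * η + 1 - η := by nlinarith
  unfold Tlat
  split_ifs with h1 h2 h3 h4
  · -- (i)
    rw [div_le_iff₀ hρ] at h1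
    rw [show ζ * F / ρ + (1 - η) * R = (ζ * F + (1 - η) * R * ρ) / ρ by field_simp,
      le_div_iff₀ hρ] at h2
    rw [div_le_div_iff₀ hR hRs]
    nlinarith [mul_le_mul_of_nonneg_left h1 hζ0.le]
  · -- (ii)
    rw [div_le_iff₀ hρ] at h1
    rw [div_le_div_iff₀ hR hF]
    nlinarith
  · -- (iii)
    rw [div_le_iff₀ hρ] at h1
    rw [div_le_div_iff₀ hR hF]
    nlinarith
  · -- (iv)
    rw [div_le_div_iff₀ hR hRs]
    nlinarith
  · exact le_rfl

lemma V_nonneg (D ρ ζ R Rs F η : ℝ) (hD : 0 < D) (hρ : 0 < ρ) (hζ0 : 0 < ζ) (hζ1 : ζ < 1)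
    (hR : 0 < R) (hRs : 0 < Rs) (hF : 0 < F) (hη0 : 0 ≤ η) (hη1 : η ≤ 1) :
    0 ≤ Vsto D ρ ζ R Rs F η := by
  have hρ0 : ρ ≠ 0 := hρ.ne'
  unfold Vsto
  split_ifs with h1 h2 h3
  · rw [div_le_iff₀ hρ] at h1
    rw [show ζ * F / ρ + (1 - η) * R = (ζ * F + (1 - η) * R * ρ) / ρ by field_simp,
      le_div_iff₀ hρ] at h2
    apply div_nonneg _ hR.le
    apply mul_nonneg hD.le
    rw [sub_nonneg, show (1 - ζ) * F / ρ = ((1 - ζ) * F) / ρ by ring, div_le_iff₀ hρ]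
    nlinarith
  · rw [div_le_iff₀ hρ] at h1
    apply div_nonneg _ hR.le
    apply mul_nonneg hD.le
    rw [sub_nonneg, div_le_iff₀ hρ]
    linarith
  · apply div_nonneg _ hR.le
    apply mul_nonneg hD.le
    linarith
  · exact le_rfl
lemma T_ge_K (D ρ ζ R Rs F η : ℝ) (hD : 0 < D) (hρ : 0 < ρ) (hζ0 : 0 < ζ) (hζ1 : ζ < 1)
    (hR : 0 < R) (hRs : 0 < Rs) (hF : 0 < F) (hη0 : 0 ≤ η) (hη1 : η ≤ 1)
    (hA : (1 - ζ) * F < ρ * (R - Rs)) (hB : ζ * F < ρ * Rs) :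
    D * ρ / (F * (1 - ζ) + ρ * Rs) ≤ Tlat D ρ ζ R Rs F η := by
  have hρ0 : ρ ≠ 0 := hρ.ne'
  have hc : 0 < ζ * η + 1 - η := by nlinarith
  have hK : 0 < F * (1 - ζ) + ρ * Rs := by nlinarith
  unfold Tlat
  split_ifs with h1 h2 h3 h4
  · -- (i): key: η*K ≤ F
    rw [div_le_div_iff₀ hc hρ] at h3
    have key : η * (F * (1 - ζ) + ρ * Rs) ≤ F := by nlinarith
    rw [div_le_div_iff₀ hK hRs]
    nlinarith [mul_nonneg (mul_nonneg hD.le (by linarith : (0:ℝ) ≤ 1 - ζ))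
      (by linarith : (0:ℝ) ≤ F - η * (F * (1 - ζ) + ρ * Rs))]
  · -- (ii): F < η*K
    rw [not_le, div_lt_div_iff₀ hρ hc] at h3
    rw [div_le_div_iff₀ hK hF]
    nlinarith [mul_pos hD hρ]
  · -- (iii)
    rw [div_le_iff₀ hρ] at h1
    rw [not_le, show ζ * F / ρ + (1 - η) * R = (ζ * F + (1 - η) * R * ρ) / ρ by field_simp,
      div_lt_iff₀ hρ] at h2
    have key : F ≤ η * (F * (1 - ζ) + ρ * Rs) := by
      nlinarith [mul_nonneg (by linarith : (0:ℝ) ≤ 1 - η) (by linarith : (0:ℝ) ≤ η * R * ρ - F),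
        mul_le_mul_of_nonneg_left h2.le hη0]
    rw [div_le_div_iff₀ hK hF]
    nlinarith [mul_pos hD hρ]
  · -- (iv)
    rw [not_le, lt_div_iff₀ hρ] at h1
    have hKR : F * (1 - ζ) + ρ * Rs ≤ ρ * R := by nlinarith
    have key : η * (F * (1 - ζ) + ρ * Rs) ≤ F := by
      nlinarith [mul_le_mul_of_nonneg_left hKR hη0]
    rw [div_le_div_iff₀ hK hRs]
    nlinarith [mul_nonneg (mul_nonneg hD.le (by linarith : (0:ℝ) ≤ 1 - ζ))
      (by linarith : (0:ℝ) ≤ F - η * (F * (1 - ζ) + ρ * Rs))]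
  · -- (v): impossible
    exfalso
    rw [not_le, lt_div_iff₀ hρ] at h1
    rw [not_le] at h4
    nlinarith [mul_lt_mul_of_pos_left h1 (by linarith : (0:ℝ) < 1 - ζ),
      mul_lt_mul_of_pos_left h4 hρ]

lemma V_ge_min (D ρ ζ R Rs F η : ℝ) (hD : 0 < D) (hρ : 0 < ρ) (hζ0 : 0 < ζ) (hζ1 : ζ < 1)
    (hR : 0 < R) (hRs : 0 < Rs) (hF : 0 < F) (hη0 : 0 ≤ η) (hη1 : η ≤ 1)
    (hor : Rs ≤ ζ * R ∨ (1 - ζ) * F < ρ * (R - Rs)) :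
    D * (R - Rs - (1 - ζ) * F / ρ) / R ≤ Vsto D ρ ζ R Rs F η := by
  have hρ0 : ρ ≠ 0 := hρ.ne'
  have hRρ : 0 < R * ρ := mul_pos hR hρ
  have eL : D * (R - Rs - (1 - ζ) * F / ρ) / R = D * (R * ρ - Rs * ρ - (1 - ζ) * F) / (R * ρ) := by
    field_simp
  unfold Vsto
  split_ifs with h1 h2 h3
  · exact le_rfl
  · -- (iii)
    rw [not_le, show ζ * F / ρ + (1 - η) * R = (ζ * F + (1 - η) * R * ρ) / ρ by field_simp,
      div_lt_iff₀ hρ] at h2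
    have eR : D * (η * R - F / ρ) / R = D * (η * R * ρ - F) / (R * ρ) := by
      rw [div_eq_div_iff hR.ne' hRρ.ne']; field_simp
    rw [eL, eR, div_le_div_iff_of_pos_right hRρ]
    nlinarith [mul_le_mul_of_nonneg_left h2.le hD.le]
  · -- (iv)
    rw [not_le, lt_div_iff₀ hρ] at h1
    rw [eL, div_le_div_iff₀ hRρ hR]
    nlinarith [mul_nonneg (mul_nonneg (mul_nonneg hD.le hR.le) (by linarith : (0:ℝ) ≤ 1 - ζ))
      (by linarith : (0:ℝ) ≤ F - η * R * ρ)]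
  · -- (v): impossible
    exfalso
    rw [not_le, lt_div_iff₀ hρ] at h1
    rw [not_le] at h3
    rcases hor with hor | hor
    · nlinarith [mul_nonneg (mul_nonneg (by linarith : (0:ℝ) ≤ 1 - ζ) (by linarith : (0:ℝ) ≤ 1 - η)) hR.le]
    · nlinarith [mul_lt_mul_of_pos_left h1 (by linarith : (0:ℝ) < 1 - ζ),
        mul_lt_mul_of_pos_left h3 hρ]
lemma T_ge_case5 (D ρ ζ R Rs F η : ℝ) (hD : 0 < D) (hρ : 0 < ρ) (hζ0 : 0 < ζ) (hζ1 : ζ < 1)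
    (hR : 0 < R) (hRs : 0 < Rs) (hF : 0 < F) (hη0 : 0 ≤ η) (hη1 : η ≤ 1)
    (hA : ρ * Rs ≤ ζ * F) (hB : F < ρ * R) :
    ζ * D / Rs ≤ Tlat D ρ ζ R Rs F η := by
  have hρ0 : ρ ≠ 0 := hρ.ne'
  have hc : 0 < ζ * η + 1 - η := by nlinarith
  have hcz : 0 ≤ (1 - ζ) * (1 - η) := mul_nonneg (by linarith) (by linarith)
  unfold Tlat
  split_ifs with h1 h2 h3 h4
  · rw [div_le_div_iff_of_pos_right hRs]
    nlinarith [mul_nonneg hD.le hcz]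
  · rw [not_le, div_lt_div_iff₀ hρ hc] at h3
    have key : ζ * F ≤ η * ρ * Rs := by nlinarith [mul_nonneg hF.le hcz]
    rw [div_le_div_iff₀ hRs hF]
    nlinarith [mul_le_mul_of_nonneg_left key hD.le]
  · rw [div_le_iff₀ hρ] at h1
    rw [not_le, show ζ * F / ρ + (1 - η) * R = (ζ * F + (1 - η) * R * ρ) / ρ by field_simp,
      div_lt_iff₀ hρ] at h2
    have hRRs : Rs ≤ R := by
      nlinarith [mul_nonneg (by linarith : (0:ℝ) ≤ 1 - η) (mul_pos hR hρ).le]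
    have key : ζ * F ≤ η * ρ * Rs := by
      nlinarith [mul_nonneg (by linarith : (0:ℝ) ≤ 1 - η) (mul_nonneg hρ.le (by linarith : (0:ℝ) ≤ R - Rs))]
    rw [div_le_div_iff₀ hRs hF]
    nlinarith [mul_le_mul_of_nonneg_left key hD.le]
  · rw [div_le_div_iff_of_pos_right hRs]
    nlinarith [mul_nonneg hD.le hcz]
  · exfalso
    rw [not_le] at h4
    nlinarith [mul_nonneg hcz hR.le]

lemma T_ge_case6 (D ρ ζ R Rs F η : ℝ) (hD : 0 < D) (hρ : 0 < ρ) (hζ0 : 0 < ζ) (hζ1 : ζ < 1)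
    (hR : 0 < R) (hRs : 0 < Rs) (hF : 0 < F) (hη0 : 0 ≤ η) (hη1 : η ≤ 1)
    (hA : ρ * R ≤ F) (hB : Rs ≤ ζ * R) :
    ζ * D / Rs ≤ Tlat D ρ ζ R Rs F η := by
  have hρ0 : ρ ≠ 0 := hρ.ne'
  have hc : 0 < ζ * η + 1 - η := by nlinarith
  have hcz : 0 ≤ (1 - ζ) * (1 - η) := mul_nonneg (by linarith) (by linarith)
  unfold Tlat
  split_ifs with h1 h2 h3 h4
  · rw [div_le_div_iff_of_pos_right hRs]
    nlinarith [mul_nonneg hD.le hcz]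
  · exfalso
    rw [div_le_iff₀ hρ] at h1
    have hη : η = 1 := by
      have : 1 ≤ η := by nlinarith
      linarith
    subst hη
    rw [not_le, div_lt_div_iff₀ hρ hc] at h3
    nlinarith
  · exfalso
    rw [div_le_iff₀ hρ] at h1
    rw [not_le, show ζ * F / ρ + (1 - η) * R = (ζ * F + (1 - η) * R * ρ) / ρ by field_simp,
      div_lt_iff₀ hρ] at h2
    nlinarith [mul_nonneg (by linarith : (0:ℝ) ≤ 1 - η) (mul_pos hR hρ).le]
  · rw [div_le_div_iff_of_pos_right hRs]
    nlinarith [mul_nonneg hD.le hcz]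
  · exfalso
    rw [not_le] at h4
    nlinarith [mul_nonneg hcz hR.le]

lemma V_ge_case6 (D ρ ζ R Rs F η : ℝ) (hD : 0 < D) (hρ : 0 < ρ) (hζ0 : 0 < ζ) (hζ1 : ζ < 1)
    (hR : 0 < R) (hRs : 0 < Rs) (hF : 0 < F) (hη0 : 0 ≤ η) (hη1 : η ≤ 1)
    (hA : ρ * R ≤ F) (hB : Rs ≤ ζ * R) :
    D * (ζ * R - Rs) / R ≤ Vsto D ρ ζ R Rs F η := by
  have hρ0 : ρ ≠ 0 := hρ.ne'
  have hcz : 0 ≤ (1 - ζ) * (1 - η) := mul_nonneg (by linarith) (by linarith)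
  unfold Vsto
  split_ifs with h1 h2 h3
  · -- F = ρ R
    rw [div_le_iff₀ hρ] at h1
    have hFR : F = ρ * R := by
      have : F ≤ ρ * R := by nlinarith [mul_nonneg (by linarith : (0:ℝ) ≤ 1 - η) (mul_pos hR hρ).le]
      linarith
    have e : (1 - ζ) * F / ρ = (1 - ζ) * R := by rw [hFR]; field_simp
    rw [e, div_le_div_iff_of_pos_right hR]
    exact le_of_eq (by ring)
  · exfalso
    rw [div_le_iff₀ hρ] at h1
    rw [not_le, show ζ * F / ρ + (1 - η) * R = (ζ * F + (1 - η) * R * ρ) / ρ by field_simp,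
      div_lt_iff₀ hρ] at h2
    nlinarith [mul_nonneg (by linarith : (0:ℝ) ≤ 1 - η) (mul_pos hR hρ).le]
  · rw [div_le_div_iff_of_pos_right hR]
    nlinarith [mul_nonneg (mul_nonneg hD.le hcz) hR.le]
  · exfalso
    rw [not_le] at h3
    nlinarith [mul_nonneg hcz hR.le]
lemma eval_case1 (D ρ ζ R Rs F : ℝ) (hD : 0 < D) (hρ : 0 < ρ) (hζ0 : 0 < ζ) (hζ1 : ζ < 1)
    (hR : 0 < R) (hRs : 0 < Rs) (hF : 0 < F) (h : R < Rs) :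
    Tlat D ρ ζ R Rs F 0 = D / R ∧ Vsto D ρ ζ R Rs F 0 = 0 := by
  have h1 : ¬(F / ρ ≤ 0 * R) := by
    rw [not_le, zero_mul]
    positivity
  have h4 : ¬(Rs ≤ (ζ * 0 + 1 - 0) * R) := by
    rw [not_le]
    nlinarith
  constructor
  · simp only [Tlat, if_neg h1, if_neg h4]
  · simp only [Vsto, if_neg h1, if_neg h4]

lemma eval_case24 (D ρ ζ R Rs F : ℝ) (hD : 0 < D) (hρ : 0 < ρ) (hζ0 : 0 < ζ) (hζ1 : ζ < 1)
    (hR : 0 < R) (hRs : 0 < Rs) (hF : 0 < F)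
    (hA : (1 - ζ) * F < ρ * (R - Rs)) (hB : ζ * F < ρ * Rs) :
    Tlat D ρ ζ R Rs F (F / (F * (1 - ζ) + ρ * Rs)) = D * ρ / (F * (1 - ζ) + ρ * Rs) ∧
    Vsto D ρ ζ R Rs F (F / (F * (1 - ζ) + ρ * Rs)) = D * (R - Rs - (1 - ζ) * F / ρ) / R := by
  have hρ0 : ρ ≠ 0 := hρ.ne'
  have hK : 0 < F * (1 - ζ) + ρ * Rs := by nlinarith
  have hK0 : F * (1 - ζ) + ρ * Rs ≠ 0 := hK.ne'
  have h1 : F / ρ ≤ F / (F * (1 - ζ) + ρ * Rs) * R := by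
    rw [div_mul_eq_mul_div, div_le_div_iff₀ hρ hK]
    nlinarith [mul_pos hF (show (0:ℝ) < ρ * R - (F * (1 - ζ) + ρ * Rs) by linarith)]
  have h2 : Rs ≤ ζ * F / ρ + (1 - F / (F * (1 - ζ) + ρ * Rs)) * R := by
    rw [← sub_nonneg]
    have e : ζ * F / ρ + (1 - F / (F * (1 - ζ) + ρ * Rs)) * R - Rs
        = ((ρ * Rs - ζ * F) * (ρ * R - (F * (1 - ζ) + ρ * Rs))) / (ρ * (F * (1 - ζ) + ρ * Rs)) := by
      field_simp
      ring
    rw [e]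
    apply div_nonneg _ (by positivity)
    nlinarith [mul_pos (show (0:ℝ) < ρ * Rs - ζ * F by linarith)
      (show (0:ℝ) < ρ * R - (F * (1 - ζ) + ρ * Rs) by linarith)]
  have ec : ζ * (F / (F * (1 - ζ) + ρ * Rs)) + 1 - F / (F * (1 - ζ) + ρ * Rs)
      = ρ * Rs / (F * (1 - ζ) + ρ * Rs) := by
    field_simp
    ring
  have h3 : F / (F * (1 - ζ) + ρ * Rs) * Rs /
      (ζ * (F / (F * (1 - ζ) + ρ * Rs)) + 1 - F / (F * (1 - ζ) + ρ * Rs)) ≤ F / ρ := by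
    rw [ec]
    apply le_of_eq
    rw [div_eq_div_iff (by positivity) hρ0]
    field_simp
  refine ⟨?_, ?_⟩
  · simp only [Tlat, if_pos h1, if_pos h2, if_pos h3]
    rw [ec]
    rw [div_eq_div_iff hRs.ne' hK0]
    field_simp
  · simp only [Vsto, if_pos h1, if_pos h2]

lemma eval_case3 (D ρ ζ R Rs F : ℝ) (hD : 0 < D) (hρ : 0 < ρ) (hζ0 : 0 < ζ) (hζ1 : ζ < 1)
    (hR : 0 < R) (hRs : 0 < Rs) (hF : 0 < F)
    (hRsR : Rs ≤ R) (hζR : ζ * R < Rs) (hC : ρ * (R - Rs) ≤ (1 - ζ) * F) :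
    Tlat D ρ ζ R Rs F ((R - Rs) / ((1 - ζ) * R)) = D / R ∧
    Vsto D ρ ζ R Rs F ((R - Rs) / ((1 - ζ) * R)) = 0 := by
  have hρ0 : ρ ≠ 0 := hρ.ne'
  have h1ζ : (0:ℝ) < 1 - ζ := by linarith
  have ec : ζ * ((R - Rs) / ((1 - ζ) * R)) + 1 - (R - Rs) / ((1 - ζ) * R) = Rs / R := by
    field_simp
    ring
  have eT : D * (ζ * ((R - Rs) / ((1 - ζ) * R)) + 1 - (R - Rs) / ((1 - ζ) * R)) / Rs = D / R := by
    rw [ec, div_eq_div_iff hRs.ne' hR.ne']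
    field_simp
  by_cases h1 : F / ρ ≤ (R - Rs) / ((1 - ζ) * R) * R
  · have hle : (1 - ζ) * F ≤ ρ * (R - Rs) := by
      rw [show (R - Rs) / ((1 - ζ) * R) * R = (R - Rs) / (1 - ζ) by field_simp,
        div_le_div_iff₀ hρ h1ζ] at h1
      linarith
    have hFeq : (1 - ζ) * F = ρ * (R - Rs) := le_antisymm hle hC
    have h2 : Rs ≤ ζ * F / ρ + (1 - (R - Rs) / ((1 - ζ) * R)) * R := by
      rw [← sub_nonneg]
      have e : ζ * F / ρ + (1 - (R - Rs) / ((1 - ζ) * R)) * R - Rs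
          = ζ * ((1 - ζ) * F - ρ * (R - Rs)) / (ρ * (1 - ζ)) := by
        field_simp
        ring
      rw [e, hFeq]
      simp
    have h3 : (R - Rs) / ((1 - ζ) * R) * Rs /
        (ζ * ((R - Rs) / ((1 - ζ) * R)) + 1 - (R - Rs) / ((1 - ζ) * R)) ≤ F / ρ := by
      rw [ec, show (R - Rs) / ((1 - ζ) * R) * Rs / (Rs / R) = (R - Rs) / (1 - ζ) by
        field_simp, div_le_div_iff₀ h1ζ hρ]
      linarith
    have eV : R - Rs - (1 - ζ) * F / ρ = 0 := by
      rw [show (1 - ζ) * F / ρ = R - Rs by rw [div_eq_iff hρ0]; linarith]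
      ring
    refine ⟨?_, ?_⟩
    · simp only [Tlat, if_pos h1, if_pos h2, if_pos h3]
      exact eT
    · simp only [Vsto, if_pos h1, if_pos h2, eV]
      simp
  · have h4 : Rs ≤ (ζ * ((R - Rs) / ((1 - ζ) * R)) + 1 - (R - Rs) / ((1 - ζ) * R)) * R := by
      rw [ec]
      rw [div_mul_cancel₀ _ hR.ne']
    refine ⟨?_, ?_⟩
    · simp only [Tlat, if_neg h1, if_pos h4]
      exact eT
    · simp only [Vsto, if_neg h1, if_pos h4, ec]
      rw [div_mul_cancel₀ _ hR.ne']
      simp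

lemma eval_case5 (D ρ ζ R Rs F : ℝ) (hD : 0 < D) (hρ : 0 < ρ) (hζ0 : 0 < ζ) (hζ1 : ζ < 1)
    (hR : 0 < R) (hRs : 0 < Rs) (hF : 0 < F)
    (hA : ρ * Rs ≤ ζ * F) (hB : F < ρ * R) :
    Tlat D ρ ζ R Rs F 1 = ζ * D / Rs ∧
    Vsto D ρ ζ R Rs F 1 = D * (R - Rs - (1 - ζ) * F / ρ) / R := by
  have hρ0 : ρ ≠ 0 := hρ.ne'
  have h1 : F / ρ ≤ 1 * R := by
    rw [div_le_iff₀ hρ]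
    nlinarith
  have h2 : Rs ≤ ζ * F / ρ + (1 - 1) * R := by
    rw [show (1 - (1:ℝ)) * R = 0 by ring, add_zero, le_div_iff₀ hρ]
    linarith
  have h3 : 1 * Rs / (ζ * 1 + 1 - 1) ≤ F / ρ := by
    rw [show ζ * 1 + 1 - 1 = ζ by ring, one_mul, div_le_div_iff₀ hζ0 hρ]
    linarith
  refine ⟨?_, ?_⟩
  · simp only [Tlat, if_pos h1, if_pos h2, if_pos h3]
    ring
  · simp only [Vsto, if_pos h1, if_pos h2]

lemma eval_case6 (D ρ ζ R Rs F : ℝ) (hD : 0 < D) (hρ : 0 < ρ) (hζ0 : 0 < ζ) (hζ1 : ζ < 1)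
    (hR : 0 < R) (hRs : 0 < Rs) (hF : 0 < F)
    (hA : ρ * R ≤ F) (hB : Rs ≤ ζ * R) :
    Tlat D ρ ζ R Rs F 1 = ζ * D / Rs ∧
    Vsto D ρ ζ R Rs F 1 = D * (ζ * R - Rs) / R := by
  have hρ0 : ρ ≠ 0 := hρ.ne'
  by_cases h1 : F / ρ ≤ 1 * R
  · have hFR : F = ρ * R := by
      rw [div_le_iff₀ hρ, one_mul] at h1
      linarith
    have h2 : Rs ≤ ζ * F / ρ + (1 - 1) * R := by
      rw [show (1 - (1:ℝ)) * R = 0 by ring, add_zero, le_div_iff₀ hρ, hFR]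
      nlinarith
    have h3 : 1 * Rs / (ζ * 1 + 1 - 1) ≤ F / ρ := by
      rw [show ζ * 1 + 1 - 1 = ζ by ring, one_mul, div_le_div_iff₀ hζ0 hρ, hFR]
      nlinarith
    refine ⟨?_, ?_⟩
    · simp only [Tlat, if_pos h1, if_pos h2, if_pos h3]
      ring
    · simp only [Vsto, if_pos h1, if_pos h2]
      rw [show (1 - ζ) * F / ρ = (1 - ζ) * R by rw [hFR]; field_simp]
      ring_nf
  · have h4 : Rs ≤ (ζ * 1 + 1 - 1) * R := by
      rw [show (ζ * 1 + 1 - 1) * R = ζ * R by ring]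
      exact hB
    refine ⟨?_, ?_⟩
    · simp only [Tlat, if_neg h1, if_pos h4]
      ring
    · simp only [Vsto, if_neg h1, if_pos h4]
      ring_nf

/-- For all `R, Rs, F > 0`, `ηopt(R,Rs,F)` lies in `[0,1]` and simultaneously minimizes
both the upload latency and the required storage over `η ∈ [0,1]`; moreover the attained
values are `Topt(R,Rs,F)` and `Vopt(R,Rs,F)`. -/
theorem etaOpt_minimizes
    (D ρ ζ : ℝ) (hD : 0 < D) (hρ : 0 < ρ) (hζ : ζ ∈ Set.Ioo (0:ℝ) 1)
    (R Rs F : ℝ) (hR : 0 < R) (hRs : 0 < Rs) (hF : 0 < F) :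
    etaOpt ρ ζ R Rs F ∈ Set.Icc (0:ℝ) 1 ∧
    (∀ η ∈ Set.Icc (0:ℝ) 1,
      Tlat D ρ ζ R Rs F (etaOpt ρ ζ R Rs F) ≤ Tlat D ρ ζ R Rs F η ∧
      Vsto D ρ ζ R Rs F (etaOpt ρ ζ R Rs F) ≤ Vsto D ρ ζ R Rs F η) ∧
    Tlat D ρ ζ R Rs F (etaOpt ρ ζ R Rs F) = Topt D ρ ζ R Rs F ∧
    Vsto D ρ ζ R Rs F (etaOpt ρ ζ R Rs F) = Vopt D ρ ζ R Rs F := by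
  obtain ⟨hζ0, hζ1⟩ := hζ
  have hρ0 : ρ ≠ 0 := hρ.ne'
  have h1ζ : (0:ℝ) < 1 - ζ := by linarith
  simp only [etaOpt, Topt, Vopt]
  split_ifs with h1 h2 h3 h4 h5
  · -- case 1 : R < Rs
    obtain ⟨eT, eV⟩ := eval_case1 D ρ ζ R Rs F hD hρ hζ0 hζ1 hR hRs hF h1
    refine ⟨⟨le_rfl, zero_le_one⟩, fun η hη => ?_, eT, eV⟩
    rw [eT, eV]
    exact ⟨T_ge_DR D ρ ζ R Rs F η hD hρ hζ0 hζ1 hR hRs hF hη.1 hη.2,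
      V_nonneg D ρ ζ R Rs F η hD hρ hζ0 hζ1 hR hRs hF hη.1 hη.2⟩
  · -- case 2
    rw [not_lt] at h1
    rw [lt_div_iff₀ hζ0] at h2
    rw [div_lt_div_iff₀ hρ h1ζ] at h3
    have hA : (1 - ζ) * F < ρ * (R - Rs) := by linarith
    have hB : ζ * F < ρ * Rs := by
      nlinarith [mul_lt_mul_of_pos_left hA hζ0, mul_lt_mul_of_pos_left h2 hρ]
    have hK : 0 < F * (1 - ζ) + ρ * Rs := by nlinarith
    obtain ⟨eT, eV⟩ := eval_case24 D ρ ζ R Rs F hD hρ hζ0 hζ1 hR hRs hF hA hB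
    refine ⟨⟨by positivity, ?_⟩, fun η hη => ?_, eT, eV⟩
    · rw [div_le_one hK]; linarith
    · rw [eT, eV]
      exact ⟨T_ge_K D ρ ζ R Rs F η hD hρ hζ0 hζ1 hR hRs hF hη.1 hη.2 hA hB,
        V_ge_min D ρ ζ R Rs F η hD hρ hζ0 hζ1 hR hRs hF hη.1 hη.2 (Or.inr hA)⟩
  · -- case 3
    rw [not_lt] at h1
    rw [lt_div_iff₀ hζ0] at h2
    rw [not_lt, div_le_div_iff₀ h1ζ hρ] at h3
    have hC : ρ * (R - Rs) ≤ (1 - ζ) * F := by linarith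
    obtain ⟨eT, eV⟩ := eval_case3 D ρ ζ R Rs F hD hρ hζ0 hζ1 hR hRs hF h1 (by linarith) hC
    refine ⟨⟨div_nonneg (by linarith) (by positivity), ?_⟩, fun η hη => ?_, eT, eV⟩
    · rw [div_le_one (by positivity)]; nlinarith
    · rw [eT, eV]
      exact ⟨T_ge_DR D ρ ζ R Rs F η hD hρ hζ0 hζ1 hR hRs hF hη.1 hη.2,
        V_nonneg D ρ ζ R Rs F η hD hρ hζ0 hζ1 hR hRs hF hη.1 hη.2⟩
  · -- case 4
    rw [not_lt] at h1
    rw [not_lt, div_le_iff₀ hζ0] at h2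
    rw [div_lt_div_iff₀ hρ hζ0] at h4
    have hB : ζ * F < ρ * Rs := by nlinarith
    have hA : (1 - ζ) * F < ρ * (R - Rs) := by
      nlinarith [mul_lt_mul_of_pos_left hB h1ζ, mul_le_mul_of_nonneg_left h2 hρ.le]
    have hK : 0 < F * (1 - ζ) + ρ * Rs := by nlinarith
    obtain ⟨eT, eV⟩ := eval_case24 D ρ ζ R Rs F hD hρ hζ0 hζ1 hR hRs hF hA hB
    refine ⟨⟨by positivity, ?_⟩, fun η hη => ?_, eT, eV⟩
    · rw [div_le_one hK]; linarith
    · rw [eT, eV]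
      exact ⟨T_ge_K D ρ ζ R Rs F η hD hρ hζ0 hζ1 hR hRs hF hη.1 hη.2 hA hB,
        V_ge_min D ρ ζ R Rs F η hD hρ hζ0 hζ1 hR hRs hF hη.1 hη.2 (Or.inr hA)⟩
  · -- case 5
    rw [not_lt] at h1
    rw [not_lt, div_le_iff₀ hζ0] at h2
    rw [not_lt, div_le_div_iff₀ hζ0 hρ] at h4
    rw [div_lt_iff₀ hρ] at h5
    have hA : ρ * Rs ≤ ζ * F := by linarith
    have hB : F < ρ * R := by linarith
    have hζRs : Rs ≤ ζ * R := by nlinarith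
    obtain ⟨eT, eV⟩ := eval_case5 D ρ ζ R Rs F hD hρ hζ0 hζ1 hR hRs hF hA hB
    refine ⟨⟨zero_le_one, le_rfl⟩, fun η hη => ?_, eT, eV⟩
    rw [eT, eV]
    exact ⟨T_ge_case5 D ρ ζ R Rs F η hD hρ hζ0 hζ1 hR hRs hF hη.1 hη.2 hA hB,
      V_ge_min D ρ ζ R Rs F η hD hρ hζ0 hζ1 hR hRs hF hη.1 hη.2 (Or.inl hζRs)⟩
  · -- case 6
    rw [not_lt] at h1
    rw [not_lt, div_le_iff₀ hζ0] at h2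
    rw [not_lt, div_le_div_iff₀ hζ0 hρ] at h4
    rw [not_lt, le_div_iff₀ hρ] at h5
    have hA : ρ * R ≤ F := by linarith
    have hB : Rs ≤ ζ * R := by linarith
    obtain ⟨eT, eV⟩ := eval_case6 D ρ ζ R Rs F hD hρ hζ0 hζ1 hR hRs hF hA hB
    refine ⟨⟨zero_le_one, le_rfl⟩, fun η hη => ?_, eT, eV⟩
    rw [eT, eV]
    exact ⟨T_ge_case6 D ρ ζ R Rs F η hD hρ hζ0 hζ1 hR hRs hF hη.1 hη.2 hA hB,
      V_ge_case6 D ρ ζ R Rs F η hD hρ hζ0 hζ1 hR hRs hF hη.1 hη.2 hA hB⟩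

end
end

section
/- Suppose R > 0, Rs > 0, F > 0 and R < Rs. Then η = 0 simultaneously minimizes latency and storage: for every η ∈ [0,1], T(R,Rs,F,0) ≤ T(R,Rs,F,η) and V(R,Rs,F,0) ≤ V(R,Rs,F,η); moreover T(R,Rs,F,0) = D/R and V(R,Rs,F,0) = 0. -/
noncomputable section

/-- If `R < Rs`, then `η = 0` simultaneously minimizes latency and storage over `η ∈ [0,1]`,
with `T(R,Rs,F,0) = D/R` and `V(R,Rs,F,0) = 0`. -/
theorem eta_zero_optimal_of_R_lt_Rs
    (D ρ ζ : ℝ) (hD : 0 < D) (hρ : 0 < ρ) (hζ : ζ ∈ Set.Ioo (0:ℝ) 1)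
    (R Rs F : ℝ) (hR : 0 < R) (hRs : 0 < Rs) (hF : 0 < F)
    (hcase : R < Rs) :
    (∀ η ∈ Set.Icc (0:ℝ) 1,
      Tlat D ρ ζ R Rs F 0 ≤ Tlat D ρ ζ R Rs F η ∧
      Vsto D ρ ζ R Rs F 0 ≤ Vsto D ρ ζ R Rs F η) ∧
    Tlat D ρ ζ R Rs F 0 = D / R ∧
    Vsto D ρ ζ R Rs F 0 = 0 := by
  obtain ⟨hζ0, hζ1⟩ := hζ
  have hfρ : 0 < F / ρ := div_pos hF hρ
  have h1 : ¬ (F / ρ ≤ (0:ℝ) * R) := by push_neg; simpa using hfρ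
  have h2 : ¬ (Rs ≤ (ζ * 0 + 1 - 0) * R) := by push_neg; nlinarith
  have hT0 : Tlat D ρ ζ R Rs F 0 = D / R := by
    unfold Tlat; rw [if_neg h1, if_neg h2]
  have hV0 : Vsto D ρ ζ R Rs F 0 = 0 := by
    unfold Vsto; rw [if_neg h1, if_neg h2]
  refine ⟨?_, hT0, hV0⟩
  rintro η ⟨hη0, hη1⟩
  have hkpos : 0 < ζ * η + 1 - η := by nlinarith
  constructor
  · rw [hT0]
    unfold Tlat
    split_ifs with ha hb hc
    · -- case (i)
      have hηpos : 0 < η := by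
        by_contra h; push_neg at h
        nlinarith
      have h3 : η * Rs ≤ F / ρ * (ζ * η + 1 - η) := (div_le_iff₀ hkpos).mp hc
      have hRskR : Rs ≤ (ζ * η + 1 - η) * R := by nlinarith
      rw [div_le_div_iff₀ hR hRs]; nlinarith
    · -- case (ii)
      have h4 : F ≤ η * R * ρ := (div_le_iff₀ hρ).mp ha
      rw [div_le_div_iff₀ hR hF]; nlinarith
    · -- case (iii)
      have h4 : F ≤ η * R * ρ := (div_le_iff₀ hρ).mp ha
      rw [div_le_div_iff₀ hR hF]; nlinarith
    · -- case (iv)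
      rename_i hb'
      rw [div_le_div_iff₀ hR hRs]; nlinarith
    · exact le_refl _
  · rw [hV0]
    unfold Vsto
    split_ifs with ha hb hc
    · apply div_nonneg _ hR.le
      apply mul_nonneg hD.le
      nlinarith [mul_div_assoc ζ F ρ]
    · apply div_nonneg _ hR.le
      apply mul_nonneg hD.le
      linarith
    · apply div_nonneg _ hR.le
      apply mul_nonneg hD.le
      linarith
    · exact le_refl _


end
end

section
/- Suppose R > 0, Rs > 0, F > 0, Rs ≤ R < Rs/ζ and F/ρ < (R−Rs)/(1−ζ). Then η* = F/(F(1−ζ)+ρRs) simultaneously minimizes latency and storage: for every η ∈ [0,1], T(R,Rs,F,η*) ≤ T(R,Rs,F,η) and V(R,Rs,F,η*) ≤ V(R,Rs,F,η); moreover T(R,Rs,F,η*) = Dρ/(F(1−ζ)+ρRs) and V(R,Rs,F,η*) = D(R − Rs − (1−ζ)F/ρ)/R. -/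
set_option maxHeartbeats 1000000


noncomputable section

/-- If `Rs ≤ R < Rs/ζ` and `F/ρ < (R−Rs)/(1−ζ)`, then `η* = F/(F(1−ζ)+ρRs)` simultaneously
minimizes latency and storage, with `T = Dρ/(F(1−ζ)+ρRs)` and `V = D(R−Rs−(1−ζ)F/ρ)/R`. -/
theorem eta_opt_case2
    (D ρ ζ : ℝ) (hD : 0 < D) (hρ : 0 < ρ) (hζ : ζ ∈ Set.Ioo (0:ℝ) 1)
    (R Rs F : ℝ) (hR : 0 < R) (hRs : 0 < Rs) (hF : 0 < F)
    (h1 : Rs ≤ R) (h2 : R < Rs / ζ) (h3 : F / ρ < (R - Rs) / (1 - ζ)) :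
    (∀ η ∈ Set.Icc (0:ℝ) 1,
      Tlat D ρ ζ R Rs F (F / (F * (1 - ζ) + ρ * Rs)) ≤ Tlat D ρ ζ R Rs F η ∧
      Vsto D ρ ζ R Rs F (F / (F * (1 - ζ) + ρ * Rs)) ≤ Vsto D ρ ζ R Rs F η) ∧
    Tlat D ρ ζ R Rs F (F / (F * (1 - ζ) + ρ * Rs)) = D * ρ / (F * (1 - ζ) + ρ * Rs) ∧
    Vsto D ρ ζ R Rs F (F / (F * (1 - ζ) + ρ * Rs)) = D * (R - Rs - (1 - ζ) * F / ρ) / R := by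
  obtain ⟨hζ0, hζ1⟩ := hζ
  have h1m : (0:ℝ) < 1 - ζ := by linarith
  have hA : (0:ℝ) < F * (1 - ζ) + ρ * Rs := by positivity
  have hx3 : F * (1 - ζ) < ρ * (R - Rs) := by
    rw [div_lt_div_iff₀ hρ h1m] at h3; linarith
  have hzF : ζ * F < ρ * Rs := by
    rw [lt_div_iff₀ hζ0] at h2
    nlinarith
  have hQ : 0 < (ρ * Rs - ζ * F) * (ρ * (R - Rs) - F * (1 - ζ)) := by
    apply mul_pos <;> linarith
  have hd0 : ζ * (F / (F * (1 - ζ) + ρ * Rs)) + 1 - F / (F * (1 - ζ) + ρ * Rs)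
      = ρ * Rs / (F * (1 - ζ) + ρ * Rs) := by
    field_simp; ring
  have c1 : F / ρ ≤ F / (F * (1 - ζ) + ρ * Rs) * R := by
    rw [div_mul_eq_mul_div, div_le_div_iff₀ hρ hA]
    nlinarith
  have c2 : Rs ≤ ζ * F / ρ + (1 - F / (F * (1 - ζ) + ρ * Rs)) * R := by
    rw [show ζ * F / ρ + (1 - F / (F * (1 - ζ) + ρ * Rs)) * R
        = (ζ * F * (F * (1 - ζ) + ρ * Rs) + ρ * ((F * (1 - ζ) + ρ * Rs) - F) * R)
          / (ρ * (F * (1 - ζ) + ρ * Rs)) by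
      field_simp]
    rw [le_div_iff₀ (by positivity)]
    nlinarith [hQ]
  have c3 : F / (F * (1 - ζ) + ρ * Rs) * Rs /
      (ζ * (F / (F * (1 - ζ) + ρ * Rs)) + 1 - F / (F * (1 - ζ) + ρ * Rs)) ≤ F / ρ := by
    rw [hd0]
    rw [show F / (F * (1 - ζ) + ρ * Rs) * Rs / (ρ * Rs / (F * (1 - ζ) + ρ * Rs)) = F / ρ by
      field_simp]
  have hT : Tlat D ρ ζ R Rs F (F / (F * (1 - ζ) + ρ * Rs))
      = D * ρ / (F * (1 - ζ) + ρ * Rs) := by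
    simp only [Tlat, if_pos c1, if_pos c2, if_pos c3]
    rw [hd0]
    field_simp
  have hV : Vsto D ρ ζ R Rs F (F / (F * (1 - ζ) + ρ * Rs))
      = D * (R - Rs - (1 - ζ) * F / ρ) / R := by
    simp only [Vsto, if_pos c1, if_pos c2]
  refine ⟨?_, hT, hV⟩
  intro η hη
  obtain ⟨hη0, hη1⟩ := hη
  rw [hT, hV]
  clear hT hV c1 c2 c3 hd0
  constructor
  · -- latency minimality
    simp only [Tlat]
    split_ifs with ha hb hc hd
    · -- case (i)
      have hd0' : (0:ℝ) < ζ * η + 1 - η := by nlinarith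
      rw [div_le_div_iff₀ hd0' hρ] at hc
      rw [div_le_div_iff₀ hA hRs]
      nlinarith [mul_le_mul_of_nonneg_left hc (mul_nonneg hD.le h1m.le)]
    · -- case (ii)
      push_neg at hc
      have hd0' : (0:ℝ) < ζ * η + 1 - η := by nlinarith
      rw [div_lt_div_iff₀ hρ hd0'] at hc
      have hkey : F ≤ η * (F * (1 - ζ) + ρ * Rs) := by nlinarith
      rw [div_le_div_iff₀ hA hF]
      nlinarith [mul_le_mul_of_nonneg_left hkey (by positivity : (0:ℝ) ≤ D * ρ)]
    · -- case (iii)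
      push_neg at hb
      rw [div_add' _ _ _ hρ.ne', div_lt_iff₀ hρ] at hb
      have hb2 : ρ * (R - Rs) + ζ * F < η * R * ρ := by nlinarith
      have hb3 := mul_lt_mul_of_pos_right hb2 hA
      have hQfact : F * ρ * R < (ρ * (R - Rs) + ζ * F) * (F * (1 - ζ) + ρ * Rs) := by
        nlinarith [hQ]
      have hkey : F ≤ η * (F * (1 - ζ) + ρ * Rs) := by
        nlinarith [hb3, hQfact, mul_pos hρ hR]
      rw [div_le_div_iff₀ hA hF]
      nlinarith [mul_le_mul_of_nonneg_left hkey (by positivity : (0:ℝ) ≤ D * ρ)]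
    · -- case (iv)
      push_neg at ha
      rw [lt_div_iff₀ hρ] at ha
      have hAlt : F * (1 - ζ) + ρ * Rs < ρ * R := by nlinarith
      have hkey : η * (F * (1 - ζ) + ρ * Rs) < F :=
        lt_of_le_of_lt (mul_le_mul_of_nonneg_left hAlt.le hη0) (by nlinarith)
      rw [div_le_div_iff₀ hA hRs]
      nlinarith [mul_le_mul_of_nonneg_left hkey.le (mul_nonneg hD.le h1m.le)]
    · -- case (v): impossible
      exfalso
      push_neg at ha hd
      rw [lt_div_iff₀ hρ] at ha
      nlinarith [mul_lt_mul_of_pos_left ha h1m, mul_lt_mul_of_pos_left hd hρ]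
  · -- storage minimality
    simp only [Vsto]
    split_ifs with ha hb hd
    · exact le_refl _
    · -- case (iii)
      push_neg at hb
      rw [div_add' _ _ _ hρ.ne', div_lt_iff₀ hρ] at hb
      have hF' : F / ρ * ρ = F := div_mul_cancel₀ F hρ.ne'
      have hinner : R - Rs - (1 - ζ) * F / ρ ≤ η * R - F / ρ := by
        have h' : ζ * F / ρ ≤ η * R - (R - Rs) := by
          rw [div_le_iff₀ hρ]; nlinarith [hb]
        have h'' : (1 - ζ) * F / ρ = F / ρ - ζ * F / ρ := by ring
        linarith
      gcongr D * ?_ / R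
    · -- case (iv)
      push_neg at ha
      have hF' : F / ρ * ρ = F := div_mul_cancel₀ F hρ.ne'
      have hinner : R - Rs - (1 - ζ) * F / ρ ≤ (ζ * η + 1 - η) * R - Rs := by
        have h' : (1 - ζ) * (η * R) ≤ (1 - ζ) * (F / ρ) :=
          mul_le_mul_of_nonneg_left ha.le h1m.le
        have h'' : (1 - ζ) * F / ρ = (1 - ζ) * (F / ρ) := by ring
        nlinarith [h', h'']
      gcongr D * ?_ / R
    · -- case (v): impossible
      exfalso
      push_neg at ha hd
      rw [lt_div_iff₀ hρ] at ha
      nlinarith [mul_lt_mul_of_pos_left ha h1m, mul_lt_mul_of_pos_left hd hρ]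

end
end

section
/- Suppose R > 0, Rs > 0, F > 0, Rs ≤ R < Rs/ζ and F/ρ ≥ (R−Rs)/(1−ζ). Then η* = (R−Rs)/((1−ζ)R) simultaneously minimizes latency and storage: for every η ∈ [0,1], T(R,Rs,F,η*) ≤ T(R,Rs,F,η) and V(R,Rs,F,η*) ≤ V(R,Rs,F,η); moreover T(R,Rs,F,η*) = D/R and V(R,Rs,F,η*) = 0. -/
noncomputable section

/-- If `Rs ≤ R < Rs/ζ` and `F/ρ ≥ (R−Rs)/(1−ζ)`, then `η* = (R−Rs)/((1−ζ)R)` simultaneously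
minimizes latency and storage, with `T = D/R` and `V = 0`. -/
theorem eta_opt_case3
    (D ρ ζ : ℝ) (hD : 0 < D) (hρ : 0 < ρ) (hζ : ζ ∈ Set.Ioo (0:ℝ) 1)
    (R Rs F : ℝ) (hR : 0 < R) (hRs : 0 < Rs) (hF : 0 < F)
    (h1 : Rs ≤ R) (h2 : R < Rs / ζ) (h3 : (R - Rs) / (1 - ζ) ≤ F / ρ) :
    (∀ η ∈ Set.Icc (0:ℝ) 1,
      Tlat D ρ ζ R Rs F ((R - Rs) / ((1 - ζ) * R)) ≤ Tlat D ρ ζ R Rs F η ∧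
      Vsto D ρ ζ R Rs F ((R - Rs) / ((1 - ζ) * R)) ≤ Vsto D ρ ζ R Rs F η) ∧
    Tlat D ρ ζ R Rs F ((R - Rs) / ((1 - ζ) * R)) = D / R ∧
    Vsto D ρ ζ R Rs F ((R - Rs) / ((1 - ζ) * R)) = 0 := by
  obtain ⟨hζ0, hζ1⟩ := hζ
  have h1ζ : (0:ℝ) < 1 - ζ := by linarith
  have hRne : R ≠ 0 := ne_of_gt hR
  have hRsne : Rs ≠ 0 := ne_of_gt hRs
  set E : ℝ := (R - Rs) / ((1 - ζ) * R) with hEdef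
  have hER : E * R = (R - Rs) / (1 - ζ) := by
    rw [hEdef]; field_simp
  have hk : ζ * E + 1 - E = Rs / R := by
    rw [hEdef]; field_simp; ring
  have hq : 0 < F / ρ := div_pos hF hρ
  have hT : Tlat D ρ ζ R Rs F E = D / R := by
    unfold Tlat
    by_cases hc : F / ρ ≤ E * R
    · have hqE : F / ρ = E * R := le_antisymm hc (by rw [hER]; exact h3)
      have hkR : (ζ * E + 1 - E) * R = Rs := by rw [hk]; field_simp
      have h2' : ζ * F / ρ + (1 - E) * R = Rs := by
        rw [mul_div_assoc, hqE]; linear_combination hkR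
      have h3' : E * Rs / (ζ * E + 1 - E) = F / ρ := by
        rw [hk, hqE]; field_simp
      rw [if_pos hc, if_pos (le_of_eq h2'.symm), if_pos (le_of_eq h3'), hk]
      field_simp
    · have hkR : (ζ * E + 1 - E) * R = Rs := by rw [hk]; field_simp
      rw [if_neg hc, if_pos (le_of_eq hkR.symm), hk]
      field_simp
  have hV : Vsto D ρ ζ R Rs F E = 0 := by
    unfold Vsto
    by_cases hc : F / ρ ≤ E * R
    · have hqE : F / ρ = E * R := le_antisymm hc (by rw [hER]; exact h3)
      have hkR : (ζ * E + 1 - E) * R = Rs := by rw [hk]; field_simp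
      have h2' : ζ * F / ρ + (1 - E) * R = Rs := by
        rw [mul_div_assoc, hqE]; linear_combination hkR
      have hnum : R - Rs - (1 - ζ) * F / ρ = 0 := by
        rw [mul_div_assoc, hqE]; linear_combination hkR
      rw [if_pos hc, if_pos (le_of_eq h2'.symm), hnum]
      simp
    · have hkR : (ζ * E + 1 - E) * R = Rs := by rw [hk]; field_simp
      rw [if_neg hc, if_pos (le_of_eq hkR.symm), hkR]
      simp
  refine ⟨fun η _ => ⟨?_, ?_⟩, hT, hV⟩
  · rw [hT]
    unfold Tlat
    split_ifs with ha hb hc' hd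
    · have hle : Rs ≤ (ζ * η + 1 - η) * R := by
        rw [mul_div_assoc] at hb
        nlinarith [mul_le_mul_of_nonneg_left ha hζ0.le]
      rw [div_le_div_iff₀ hR hRs]
      nlinarith
    · have hFle : F ≤ η * R * ρ := (div_le_iff₀ hρ).mp ha
      rw [div_le_div_iff₀ hR hF]
      nlinarith
    · have hFle : F ≤ η * R * ρ := (div_le_iff₀ hρ).mp ha
      rw [div_le_div_iff₀ hR hF]
      nlinarith
    · rw [div_le_div_iff₀ hR hRs]
      nlinarith
    · exact le_refl _
  · rw [hV]
    unfold Vsto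
    split_ifs with ha hb hd
    · apply div_nonneg _ hR.le
      apply mul_nonneg hD.le
      rw [mul_div_assoc] at hb ⊢
      nlinarith
    · apply div_nonneg _ hR.le
      apply mul_nonneg hD.le
      linarith
    · apply div_nonneg _ hR.le
      apply mul_nonneg hD.le
      linarith
    · exact le_refl _

end
end

section
/- Suppose R > 0, Rs > 0, F > 0, R ≥ Rs/ζ and F/ρ < Rs/ζ. Then η* = F/(F(1−ζ)+ρRs) simultaneously minimizes latency and storage: for every η ∈ [0,1], T(R,Rs,F,η*) ≤ T(R,Rs,F,η) and V(R,Rs,F,η*) ≤ V(R,Rs,F,η); moreover T(R,Rs,F,η*) = Dρ/(F(1−ζ)+ρRs) and V(R,Rs,F,η*) = D(R − Rs − (1−ζ)F/ρ)/R. -/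
noncomputable section

/-- If `R ≥ Rs/ζ` and `F/ρ < Rs/ζ`, then `η* = F/(F(1−ζ)+ρRs)` simultaneously
minimizes latency and storage, with `T = Dρ/(F(1−ζ)+ρRs)` and `V = D(R−Rs−(1−ζ)F/ρ)/R`. -/
theorem eta_opt_case4
    (D ρ ζ : ℝ) (hD : 0 < D) (hρ : 0 < ρ) (hζ : ζ ∈ Set.Ioo (0:ℝ) 1)
    (R Rs F : ℝ) (hR : 0 < R) (hRs : 0 < Rs) (hF : 0 < F)
    (h1 : Rs / ζ ≤ R) (h2 : F / ρ < Rs / ζ) :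
    (∀ η ∈ Set.Icc (0:ℝ) 1,
      Tlat D ρ ζ R Rs F (F / (F * (1 - ζ) + ρ * Rs)) ≤ Tlat D ρ ζ R Rs F η ∧
      Vsto D ρ ζ R Rs F (F / (F * (1 - ζ) + ρ * Rs)) ≤ Vsto D ρ ζ R Rs F η) ∧
    Tlat D ρ ζ R Rs F (F / (F * (1 - ζ) + ρ * Rs)) = D * ρ / (F * (1 - ζ) + ρ * Rs) ∧
    Vsto D ρ ζ R Rs F (F / (F * (1 - ζ) + ρ * Rs)) = D * (R - Rs - (1 - ζ) * F / ρ) / R := by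
  obtain ⟨hζ0, hζ1⟩ := hζ
  have hK : 0 < F * (1 - ζ) + ρ * Rs := by nlinarith
  have hζF : ζ * F < ρ * Rs := by
    have := (div_lt_div_iff₀ hρ hζ0).mp h2
    nlinarith
  have hRsζ : Rs ≤ ζ * R := by
    have := (div_le_iff₀ hζ0).mp h1
    nlinarith
  have hKρR : F * (1 - ζ) + ρ * Rs < ρ * R := by nlinarith
  -- conditions at the optimal point η* = F/K
  have cond1 : F / ρ ≤ (F / (F * (1 - ζ) + ρ * Rs)) * R := by
    rw [div_mul_eq_mul_div, div_le_div_iff₀ hρ hK]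
    nlinarith
  have cond2 : Rs ≤ ζ * F / ρ + (1 - F / (F * (1 - ζ) + ρ * Rs)) * R := by
    have e1 : (1 - F / (F * (1 - ζ) + ρ * Rs)) * R
        = (ρ * Rs - ζ * F) * R / (F * (1 - ζ) + ρ * Rs) := by
      have h : (1 - F / (F * (1 - ζ) + ρ * Rs)) = (ρ * Rs - ζ * F) / (F * (1 - ζ) + ρ * Rs) := by
        rw [eq_div_iff hK.ne']
        field_simp
        ring
      rw [h, div_mul_eq_mul_div]
    have e2 : (ρ * Rs - ζ * F) / ρ ≤ (ρ * Rs - ζ * F) * R / (F * (1 - ζ) + ρ * Rs) := by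
      rw [div_le_div_iff₀ hρ hK]
      nlinarith [mul_nonneg (sub_nonneg.2 hζF.le) (sub_nonneg.2 hKρR.le)]
    have e3 : Rs = ζ * F / ρ + (ρ * Rs - ζ * F) / ρ := by field_simp; ring
    rw [e1]
    linarith
  have hsK : ζ * (F / (F * (1 - ζ) + ρ * Rs)) + 1 - F / (F * (1 - ζ) + ρ * Rs)
      = ρ * Rs / (F * (1 - ζ) + ρ * Rs) := by
    field_simp
    ring
  have cond3 : (F / (F * (1 - ζ) + ρ * Rs)) * Rs / (ζ * (F / (F * (1 - ζ) + ρ * Rs)) + 1 - F / (F * (1 - ζ) + ρ * Rs)) ≤ F / ρ := by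
    rw [hsK]
    rw [show (F / (F * (1 - ζ) + ρ * Rs)) * Rs / (ρ * Rs / (F * (1 - ζ) + ρ * Rs)) = F / ρ by
      rw [div_eq_div_iff (by positivity) hρ.ne']
      field_simp]
  have hT : Tlat D ρ ζ R Rs F (F / (F * (1 - ζ) + ρ * Rs)) = D * ρ / (F * (1 - ζ) + ρ * Rs) := by
    rw [Tlat, if_pos cond1, if_pos cond2, if_pos cond3, hsK]
    field_simp
  have hV : Vsto D ρ ζ R Rs F (F / (F * (1 - ζ) + ρ * Rs)) = D * (R - Rs - (1 - ζ) * F / ρ) / R := by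
    rw [Vsto, if_pos cond1, if_pos cond2]
  refine ⟨?_, hT, hV⟩
  clear cond1 cond2 cond3 hsK
  intro η hη
  obtain ⟨hη0, hη1⟩ := hη
  have hs : 0 < ζ * η + 1 - η := by nlinarith
  constructor
  · -- latency
    rw [hT, Tlat]
    split_ifs with ha hb hc hd
    · -- case (i): η ≤ η*
      have h3 : η * Rs * ρ ≤ F * (ζ * η + 1 - η) := by
        rw [div_le_div_iff₀ hs hρ] at hc; linarith
      have key : ρ * Rs ≤ (ζ * η + 1 - η) * (F * (1 - ζ) + ρ * Rs) := by
        linarith [mul_nonneg (sub_nonneg.2 hζ1.le) (sub_nonneg.2 h3)]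
      rw [div_le_div_iff₀ hK hRs]
      linarith [mul_le_mul_of_nonneg_left key hD.le]
    · -- case (ii): η ≥ η*
      push_neg at hc
      have h3 : F * (ζ * η + 1 - η) < η * Rs * ρ := by
        rw [div_lt_div_iff₀ hρ hs] at hc; linarith
      have key : F ≤ η * (F * (1 - ζ) + ρ * Rs) := by linarith
      rw [div_le_div_iff₀ hK hF]
      linarith [mul_le_mul_of_nonneg_left key (mul_pos hD hρ).le]
    · -- case (iii)
      push_neg at hb
      have hb' : ζ * F + (1 - η) * R * ρ < Rs * ρ := by
        have h5 := mul_lt_mul_of_pos_right hb hρ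
        have h6 : ζ * F / ρ * ρ = ζ * F := div_mul_cancel₀ _ hρ.ne'
        linarith
      have key : F ≤ η * (F * (1 - ζ) + ρ * Rs) := by
        linarith [mul_nonneg (sub_nonneg.2 hη1) (sub_nonneg.2 hKρR.le)]
      rw [div_le_div_iff₀ hK hF]
      linarith [mul_le_mul_of_nonneg_left key (mul_pos hD hρ).le]
    · -- case (iv)
      push_neg at ha
      have ha' : η * R * ρ ≤ F := by rw [lt_div_iff₀ hρ] at ha; linarith
      have hηK : η * (F * (1 - ζ) + ρ * Rs) ≤ F := by
        linarith [mul_nonneg hη0 (sub_nonneg.2 hKρR.le)]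
      have key : ρ * Rs ≤ (ζ * η + 1 - η) * (F * (1 - ζ) + ρ * Rs) := by
        linarith [mul_nonneg (sub_nonneg.2 hζ1.le) (sub_nonneg.2 hηK)]
      rw [div_le_div_iff₀ hK hRs]
      linarith [mul_le_mul_of_nonneg_left key hD.le]
    · -- case (v): impossible
      exfalso
      push_neg at ha hd
      have ha' : η * R * ρ ≤ F := by rw [lt_div_iff₀ hρ] at ha; linarith
      have hηK : η * (F * (1 - ζ) + ρ * Rs) ≤ F := by
        linarith [mul_nonneg hη0 (sub_nonneg.2 hKρR.le)]
      have key : ρ * Rs ≤ (ζ * η + 1 - η) * (F * (1 - ζ) + ρ * Rs) := by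
        linarith [mul_nonneg (sub_nonneg.2 hζ1.le) (sub_nonneg.2 hηK)]
      linarith [mul_nonneg hs.le (sub_nonneg.2 hKρR.le),
        mul_lt_mul_of_pos_right hd hρ]
  · -- storage
    rw [hV, Vsto]
    split_ifs with ha hb hd
    · exact le_refl _
    · -- case (iii)
      push_neg at hb
      have h4 : R - Rs - (1 - ζ) * F / ρ ≤ η * R - F / ρ := by
        have h5 : (1 - ζ) * F / ρ = F / ρ - ζ * F / ρ := by ring
        linarith
      rw [div_le_div_iff₀ hR hR]
      linarith [mul_le_mul_of_nonneg_right (mul_le_mul_of_nonneg_left h4 hD.le) hR.le]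
    · -- case (iv)
      push_neg at ha
      have h4 : R - Rs - (1 - ζ) * F / ρ ≤ (ζ * η + 1 - η) * R - Rs := by
        have h6 : (1 - ζ) * F / ρ = (1 - ζ) * (F / ρ) := mul_div_assoc _ _ _
        rw [h6]
        linarith [mul_le_mul_of_nonneg_left ha.le (sub_nonneg.2 hζ1.le)]
      rw [div_le_div_iff₀ hR hR]
      linarith [mul_le_mul_of_nonneg_right (mul_le_mul_of_nonneg_left h4 hD.le) hR.le]
    · -- case (v): impossible
      exfalso
      push_neg at ha hd
      have ha' : η * R * ρ ≤ F := by rw [lt_div_iff₀ hρ] at ha; linarith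
      have hηK : η * (F * (1 - ζ) + ρ * Rs) ≤ F := by
        linarith [mul_nonneg hη0 (sub_nonneg.2 hKρR.le)]
      have key : ρ * Rs ≤ (ζ * η + 1 - η) * (F * (1 - ζ) + ρ * Rs) := by
        linarith [mul_nonneg (sub_nonneg.2 hζ1.le) (sub_nonneg.2 hηK)]
      linarith [mul_nonneg hs.le (sub_nonneg.2 hKρR.le),
        mul_lt_mul_of_pos_right hd hρ]

end
end

section
/- Suppose R > 0, Rs > 0, F > 0, R ≥ Rs/ζ and F/ρ ≥ R. Then η* = 1 simultaneously minimizes latency and storage: for every η ∈ [0,1], T(R,Rs,F,1) ≤ T(R,Rs,F,η) and V(R,Rs,F,1) ≤ V(R,Rs,F,η); moreover T(R,Rs,F,1) = ζD/Rs and V(R,Rs,F,1) = D(ζR − Rs)/R. -/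
noncomputable section

/-- If `R ≥ Rs/ζ` and `F/ρ ≥ R`, then `η* = 1` simultaneously minimizes latency and
storage, with `T = ζD/Rs` and `V = D(ζR−Rs)/R`. -/
theorem eta_opt_case6
    (D ρ ζ : ℝ) (hD : 0 < D) (hρ : 0 < ρ) (hζ : ζ ∈ Set.Ioo (0:ℝ) 1)
    (R Rs F : ℝ) (hR : 0 < R) (hRs : 0 < Rs) (hF : 0 < F)
    (h1 : Rs / ζ ≤ R) (h2 : R ≤ F / ρ) :
    (∀ η ∈ Set.Icc (0:ℝ) 1,
      Tlat D ρ ζ R Rs F 1 ≤ Tlat D ρ ζ R Rs F η ∧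
      Vsto D ρ ζ R Rs F 1 ≤ Vsto D ρ ζ R Rs F η) ∧
    Tlat D ρ ζ R Rs F 1 = ζ * D / Rs ∧
    Vsto D ρ ζ R Rs F 1 = D * (ζ * R - Rs) / R := by

  obtain ⟨hζ0, hζ1⟩ := hζ
  have hRsζ : Rs ≤ ζ * R := by
    rw [div_le_iff₀ hζ0] at h1; nlinarith
  have hT1 : Tlat D ρ ζ R Rs F 1 = ζ * D / Rs := by
    unfold Tlat
    split_ifs with h₁ h₂ h₃ h₄
    · ring
    · exfalso
      have hFR : F / ρ = R := le_antisymm (by linarith [h₁]) h2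
      rw [hFR] at h₃
      apply h₃
      calc 1 * Rs / (ζ * 1 + 1 - 1) = Rs / ζ := by ring_nf
        _ ≤ R := h1
    · exfalso
      have hFR : F / ρ = R := le_antisymm (by linarith [h₁]) h2
      apply h₂
      rw [mul_div_assoc, hFR]; nlinarith
    · ring
    · exfalso; apply h₄; nlinarith
  have hV1 : Vsto D ρ ζ R Rs F 1 = D * (ζ * R - Rs) / R := by
    unfold Vsto
    split_ifs with h₁ h₂ h₄
    · have hFR : F / ρ = R := le_antisymm (by linarith [h₁]) h2
      have h5 : (1 - ζ) * F / ρ = (1 - ζ) * R := by rw [mul_div_assoc, hFR]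
      rw [h5]; ring
    · exfalso
      have hFR : F / ρ = R := le_antisymm (by linarith [h₁]) h2
      apply h₂
      rw [mul_div_assoc, hFR]; nlinarith
    · ring
    · exfalso; apply h₄; nlinarith
  refine ⟨?_, hT1, hV1⟩
  intro η hη
  obtain ⟨hη0, hη1⟩ := hη
  rcases eq_or_lt_of_le hη1 with heq | hlt
  · subst heq; exact ⟨le_refl _, le_refl _⟩
  · have hout : ¬ (F / ρ ≤ η * R) := by nlinarith
    have hcoef : ζ ≤ ζ * η + 1 - η := by nlinarith
    have hin : Rs ≤ (ζ * η + 1 - η) * R := by nlinarith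
    constructor
    · rw [hT1]
      unfold Tlat
      rw [if_neg hout, if_pos hin]
      rw [div_le_div_iff₀ hRs hRs]
      nlinarith [mul_le_mul_of_nonneg_left hcoef hD.le, mul_pos hD hRs]
    · rw [hV1]
      unfold Vsto
      rw [if_neg hout, if_pos hin]
      rw [div_le_div_iff₀ hR hR]
      nlinarith [mul_le_mul_of_nonneg_left (mul_le_mul_of_nonneg_right hcoef hR.le) hD.le]


end
end

section
/- If x* = (Btot*, RStot*, Ftot*, Vtot*, (B_u*), (Rs_u*), (F_u*)) is (P3)-feasible and J(x*) ≤ J(x) for every (P3)-feasible point x, then in fact J(x*) ≤ J(x) for every (P2)-feasible point x; that is, every optimal solution of (P3) is an optimal solution of (P2). -/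
noncomputable section

/-- The overall resource cost `J = a1·Btot + a2·RStot + a3·Ftot + a4·Vtot`. -/
def cost (a1 a2 a3 a4 Btot RStot Ftot Vtot : ℝ) : ℝ :=
  a1 * Btot + a2 * RStot + a3 * Ftot + a4 * Vtot

/-- Feasibility for problem (P2) (here the per-user CPU frequencies satisfy `F_u ≥ 0`). -/
def P2Feas (U : ℕ) (D ρ ζ : Fin U → ℝ) (Rfun : Fin U → ℝ → ℝ) (Treq : ℝ)
    (Btot RStot Ftot Vtot : ℝ) (B Rs F : Fin U → ℝ) : Prop :=
  0 ≤ Btot ∧ 0 ≤ RStot ∧ 0 ≤ Ftot ∧ 0 ≤ Vtot ∧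
  (∀ u, 0 ≤ B u) ∧ (∀ u, 0 < Rfun u (B u)) ∧ (∀ u, 0 < Rs u) ∧ (∀ u, 0 ≤ F u) ∧
  (∀ u, Topt (D u) (ρ u) (ζ u) (Rfun u (B u)) (Rs u) (F u) ≤ Treq) ∧
  (∑ u, Vopt (D u) (ρ u) (ζ u) (Rfun u (B u)) (Rs u) (F u)) ≤ Vtot ∧
  (∑ u, B u) ≤ Btot ∧ (∑ u, Rs u) ≤ RStot ∧ (∑ u, F u) ≤ Ftot

/-- Feasibility for problem (P3): (P2)-feasibility plus the extra constraints
`Rs_u ≤ R_u(B_u) ≤ Rs_u/ζ_u` and `F_u = ρ_u(R_u(B_u) − Rs_u)/(1−ζ_u)`. -/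
def P3Feas (U : ℕ) (D ρ ζ : Fin U → ℝ) (Rfun : Fin U → ℝ → ℝ) (Treq : ℝ)
    (Btot RStot Ftot Vtot : ℝ) (B Rs F : Fin U → ℝ) : Prop :=
  P2Feas U D ρ ζ Rfun Treq Btot RStot Ftot Vtot B Rs F ∧
  (∀ u, Rs u ≤ Rfun u (B u) ∧ Rfun u (B u) ≤ Rs u / ζ u) ∧
  (∀ u, F u = ρ u * (Rfun u (B u) - Rs u) / (1 - ζ u))

/-- Per-user reduction: from any feasible per-user (P2) triple, produce a componentwise
smaller triple satisfying the (P3) structural constraints with latency `D / R'`. -/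
lemma per_user (D ρ ζ R Rs F Treq : ℝ) (hρ : 0 < ρ)
    (hζ0 : 0 < ζ) (hζ1 : ζ < 1) (hR : 0 < R) (hRs : 0 < Rs) (hF : 0 ≤ F)
    (hT : Topt D ρ ζ R Rs F ≤ Treq) :
    ∃ R' Rs' F', 0 < R' ∧ R' ≤ R ∧ 0 < Rs' ∧ Rs' ≤ Rs ∧ 0 ≤ F' ∧ F' ≤ F ∧
      Rs' ≤ R' ∧ R' ≤ Rs' / ζ ∧ F' = ρ * (R' - Rs') / (1 - ζ) ∧ D / R' ≤ Treq := by
  have h1ζ : 0 < 1 - ζ := by linarith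
  unfold Topt at hT
  by_cases h1 : R < Rs
  · rw [if_pos h1] at hT
    refine ⟨R, R, 0, hR, le_refl R, hR, le_of_lt h1, le_refl 0, hF, le_refl R, ?_, ?_, hT⟩
    · rw [le_div_iff₀ hζ0]; nlinarith
    · field_simp; ring
  · rw [if_neg h1] at hT
    push_neg at h1
    have hden : 0 < F * (1 - ζ) + ρ * Rs := by nlinarith [mul_nonneg hF h1ζ.le, mul_pos hρ hRs]
    have hRp : 0 < F * (1 - ζ) / ρ + Rs := by positivity
    have hsplit : F * (1 - ζ) / ρ + Rs = (F * (1 - ζ) + ρ * Rs) / ρ := by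
      field_simp
    have hDval : D / (F * (1 - ζ) / ρ + Rs) = D * ρ / (F * (1 - ζ) + ρ * Rs) := by
      rw [hsplit, div_div_eq_mul_div]
    have hFeq : F = ρ * (F * (1 - ζ) / ρ + Rs - Rs) / (1 - ζ) := by
      field_simp; ring
    by_cases h2 : R < Rs / ζ
    · rw [if_pos h2] at hT
      by_cases h3 : F / ρ < (R - Rs) / (1 - ζ)
      · rw [if_pos h3] at hT
        have h3' : F * (1 - ζ) < (R - Rs) * ρ := (div_lt_div_iff₀ hρ h1ζ).mp h3
        have hle : F * (1 - ζ) / ρ < R - Rs := (div_lt_iff₀ hρ).mpr (by linarith)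
        have hFnn : 0 ≤ F * (1 - ζ) / ρ := by positivity
        refine ⟨F * (1 - ζ) / ρ + Rs, Rs, F, hRp, by linarith, hRs, le_refl _, hF,
          le_refl _, by linarith, by linarith, hFeq, ?_⟩
        rw [hDval]; exact hT
      · rw [if_neg h3] at hT
        push_neg at h3
        have h3' : (R - Rs) * ρ ≤ F * (1 - ζ) := (div_le_div_iff₀ h1ζ hρ).mp h3
        refine ⟨R, Rs, ρ * (R - Rs) / (1 - ζ), hR, le_refl R, hRs, le_refl Rs,
          div_nonneg (mul_nonneg hρ.le (by linarith)) h1ζ.le, ?_, h1, le_of_lt h2, rfl, hT⟩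
        rw [div_le_iff₀ h1ζ]; nlinarith
    · rw [if_neg h2] at hT
      push_neg at h2
      by_cases h4 : F / ρ < Rs / ζ
      · rw [if_pos h4] at hT
        have h4' : F * ζ < Rs * ρ := (div_lt_div_iff₀ hρ hζ0).mp h4
        have ht : Rs = ζ * (Rs / ζ) := by field_simp
        have hFt : F < Rs / ζ * ρ := (div_lt_iff₀ hρ).mp h4
        have hlt : F * (1 - ζ) / ρ < (Rs / ζ) * (1 - ζ) := by
          rw [div_lt_iff₀ hρ]
          nlinarith [mul_lt_mul_of_pos_right hFt h1ζ]
        have hR'le : F * (1 - ζ) / ρ + Rs ≤ Rs / ζ := by nlinarith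
        have hFnn : 0 ≤ F * (1 - ζ) / ρ := by positivity
        refine ⟨F * (1 - ζ) / ρ + Rs, Rs, F, hRp, by linarith, hRs, le_refl _, hF,
          le_refl _, by linarith, hR'le, hFeq, ?_⟩
        rw [hDval]; exact hT
      · rw [if_neg h4] at hT
        push_neg at h4
        have h4' : Rs * ρ ≤ F * ζ := (div_le_div_iff₀ hζ0 hρ).mp h4
        have hRsζ : 0 < Rs / ζ := div_pos hRs hζ0
        have hRsle : Rs ≤ Rs / ζ := by rw [le_div_iff₀ hζ0]; nlinarith
        have hF'eq : ρ * (Rs / ζ - Rs) / (1 - ζ) = ρ * Rs / ζ := by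
          field_simp
        refine ⟨Rs / ζ, Rs, ρ * (Rs / ζ - Rs) / (1 - ζ), hRsζ, h2, hRs, le_refl Rs,
          div_nonneg (mul_nonneg hρ.le (by linarith)) h1ζ.le, ?_, hRsle, le_refl _, rfl, ?_⟩
        · rw [hF'eq, div_le_iff₀ hζ0]; nlinarith
        · rw [div_div_eq_mul_div, mul_comm]; exact hT

/-- On the (P3) structural region, `Topt = D / R` and `Vopt = 0`. -/
lemma topt_vopt_p3 (D ρ ζ R Rs F : ℝ) (hρ : 0 < ρ) (hζ0 : 0 < ζ) (hζ1 : ζ < 1)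
    (hRs : 0 < Rs) (h1 : Rs ≤ R) (h2 : R ≤ Rs / ζ)
    (hF : F = ρ * (R - Rs) / (1 - ζ)) :
    Topt D ρ ζ R Rs F = D / R ∧ Vopt D ρ ζ R Rs F = 0 := by
  have h1ζ : 0 < 1 - ζ := by linarith
  have hR : 0 < R := lt_of_lt_of_le hRs h1
  have hFρ : F / ρ = (R - Rs) / (1 - ζ) := by rw [hF]; field_simp
  unfold Topt Vopt
  rw [if_neg (not_lt.mpr h1), if_neg (not_lt.mpr h1)]
  by_cases hlt : R < Rs / ζ
  · rw [if_pos hlt, if_pos hlt, hFρ, if_neg (lt_irrefl _), if_neg (lt_irrefl _)]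
    exact ⟨rfl, rfl⟩
  · have hEq : R = Rs / ζ := le_antisymm h2 (not_lt.mp hlt)
    have hRsζ : Rs = ζ * R := by rw [hEq]; field_simp
    have hFρR : F / ρ = R := by rw [hFρ, hRsζ]; field_simp
    rw [if_neg hlt, if_neg hlt, hFρR, if_neg (not_lt.mpr (le_of_eq hEq.symm)),
      if_neg (not_lt.mpr (le_of_eq hEq.symm)), if_neg (lt_irrefl R)]
    constructor
    · rw [hRsζ, mul_div_mul_left D R (ne_of_gt hζ0)]
    · have : ζ * R - Rs = 0 := by rw [hRsζ]; ring
      rw [this, mul_zero, zero_div]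

/-- Every optimal solution of (P3) is an optimal solution of (P2). -/
theorem p3_optimal_is_p2_optimal
    (U : ℕ) (hU : 1 ≤ U)
    (D ρ ζ : Fin U → ℝ) (hD : ∀ u, 0 < D u) (hρ : ∀ u, 0 < ρ u)
    (hζ : ∀ u, ζ u ∈ Set.Ioo (0:ℝ) 1)
    (Rfun : Fin U → ℝ → ℝ)
    (hmono : ∀ u, StrictMonoOn (Rfun u) (Set.Ici 0))
    (hcont : ∀ u, ContinuousOn (Rfun u) (Set.Ici 0))
    (hbij : ∀ u, Set.BijOn (Rfun u) (Set.Ici 0) (Set.Ici 0))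
    (a1 a2 a3 a4 Treq : ℝ)
    (ha1 : 0 ≤ a1) (ha2 : 0 ≤ a2) (ha3 : 0 ≤ a3) (ha4 : 0 ≤ a4) (hTreq : 0 < Treq)
    (Btot RStot Ftot Vtot : ℝ) (B Rs F : Fin U → ℝ)
    (hfeas : P3Feas U D ρ ζ Rfun Treq Btot RStot Ftot Vtot B Rs F)
    (hopt : ∀ Btot' RStot' Ftot' Vtot' B' Rs' F',
      P3Feas U D ρ ζ Rfun Treq Btot' RStot' Ftot' Vtot' B' Rs' F' →
      cost a1 a2 a3 a4 Btot RStot Ftot Vtot ≤ cost a1 a2 a3 a4 Btot' RStot' Ftot' Vtot') :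
    ∀ Btot' RStot' Ftot' Vtot' B' Rs' F',
      P2Feas U D ρ ζ Rfun Treq Btot' RStot' Ftot' Vtot' B' Rs' F' →
      cost a1 a2 a3 a4 Btot RStot Ftot Vtot ≤ cost a1 a2 a3 a4 Btot' RStot' Ftot' Vtot' := by
  intro Btot' RStot' Ftot' Vtot' B' Rs' F' hP2
  obtain ⟨hB0, hRS0, hF0, hV0, hBu, hRBu, hRsu, hFu, hTu, hVsum, hBsum, hRssum, hFsum⟩ := hP2
  have hex : ∀ u, ∃ R' Rs'' F'', 0 < R' ∧ R' ≤ Rfun u (B' u) ∧ 0 < Rs'' ∧ Rs'' ≤ Rs' u ∧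
      0 ≤ F'' ∧ F'' ≤ F' u ∧ Rs'' ≤ R' ∧ R' ≤ Rs'' / ζ u ∧
      F'' = ρ u * (R' - Rs'') / (1 - ζ u) ∧ D u / R' ≤ Treq := fun u =>
    per_user (D u) (ρ u) (ζ u) (Rfun u (B' u)) (Rs' u) (F' u) Treq (hρ u)
      (hζ u).1 (hζ u).2 (hRBu u) (hRsu u) (hFu u) (hTu u)
  choose Rn Rsn Fn hRn hRle hRsn hRsle hFn hFle hc1 hc2 hc3 hc4 using hex
  have hexB : ∀ u, ∃ b, 0 ≤ b ∧ Rfun u b = Rn u := by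
    intro u
    obtain ⟨b, hb, hb2⟩ := (hbij u).surjOn (Set.mem_Ici.mpr (hRn u).le)
    exact ⟨b, hb, hb2⟩
  choose Bn hBn hBR using hexB
  have hBle : ∀ u, Bn u ≤ B' u := by
    intro u
    by_contra h
    push_neg at h
    have := hmono u (Set.mem_Ici.mpr (hBu u)) (Set.mem_Ici.mpr (hBn u)) h
    rw [hBR u] at this
    exact absurd (hRle u) (not_le.mpr this)
  have hTV : ∀ u, Topt (D u) (ρ u) (ζ u) (Rfun u (Bn u)) (Rsn u) (Fn u)
        = D u / Rn u ∧ Vopt (D u) (ρ u) (ζ u) (Rfun u (Bn u)) (Rsn u) (Fn u) = 0 := by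
    intro u
    rw [hBR u]
    exact topt_vopt_p3 (D u) (ρ u) (ζ u) (Rn u) (Rsn u) (Fn u) (hρ u)
      (hζ u).1 (hζ u).2 (hRsn u) (hc1 u) (hc2 u) (hc3 u)
  refine hopt Btot' RStot' Ftot' Vtot' Bn Rsn Fn
    ⟨⟨hB0, hRS0, hF0, hV0, hBn, ?_, hRsn, hFn, ?_, ?_, ?_, ?_, ?_⟩, ?_, ?_⟩
  · intro u; rw [hBR u]; exact hRn u
  · intro u; rw [(hTV u).1]; exact hc4 u
  · calc (∑ u, Vopt (D u) (ρ u) (ζ u) (Rfun u (Bn u)) (Rsn u) (Fn u))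
        = ∑ u : Fin U, (0:ℝ) := Finset.sum_congr rfl (fun u _ => (hTV u).2)
      _ = 0 := Finset.sum_const_zero
      _ ≤ Vtot' := hV0
  · exact le_trans (Finset.sum_le_sum (fun u _ => hBle u)) hBsum
  · exact le_trans (Finset.sum_le_sum (fun u _ => hRsle u)) hRssum
  · exact le_trans (Finset.sum_le_sum (fun u _ => hFle u)) hFsum
  · intro u; rw [hBR u]; exact ⟨hc1 u, hc2 u⟩
  · intro u; rw [hBR u]; exact hc3 u

end
end

section
/- For every (P4)-feasible point x there exists a (P4)-feasible point x' with B_u' = R_u⁻¹(D_u/T_req) for every u and Btot' = Σ_u R_u⁻¹(D_u/T_req), such that J4(x') ≤ J4(x). In particular, if (P4) admits a minimizer of J4 over its feasible set, then it admits a minimizer satisfying these equalities. -/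
noncomputable section

/-- The cost `J4 = a1·Btot + a2·RStot + a3·Ftot` of problem (P4). -/
def J4 (a1 a2 a3 Btot RStot Ftot : ℝ) : ℝ := a1 * Btot + a2 * RStot + a3 * Ftot

/-- Feasibility for problem (P4). -/
def P4Feas (U : ℕ) (D ρ ζ : Fin U → ℝ) (Rfun : Fin U → ℝ → ℝ) (Treq : ℝ)
    (Btot RStot Ftot : ℝ) (B Rs F : Fin U → ℝ) : Prop :=
  0 ≤ Btot ∧ 0 ≤ RStot ∧ 0 ≤ Ftot ∧
  (∀ u, 0 ≤ B u) ∧ (∀ u, 0 < Rs u) ∧ (∀ u, 0 ≤ F u) ∧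
  (∀ u, D u / Treq ≤ Rfun u (B u)) ∧
  (∀ u, Rs u ≤ Rfun u (B u) ∧ Rfun u (B u) ≤ Rs u / ζ u) ∧
  (∀ u, F u = ρ u * (Rfun u (B u) - Rs u) / (1 - ζ u)) ∧
  (∑ u, B u) ≤ Btot ∧ (∑ u, Rs u) ≤ RStot ∧ (∑ u, F u) ≤ Ftot

/-- For every (P4)-feasible point there is a (P4)-feasible point with
`B_u' = R_u⁻¹(D_u/T_req)` and `Btot' = Σ_u R_u⁻¹(D_u/T_req)` and no larger cost; in
particular a minimizer of (P4), if one exists, can be taken of this form. -/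
theorem p4_optimal_bandwidth
    (U : ℕ) (hU : 1 ≤ U)
    (D ρ ζ : Fin U → ℝ) (hD : ∀ u, 0 < D u) (hρ : ∀ u, 0 < ρ u)
    (hζ : ∀ u, ζ u ∈ Set.Ioo (0:ℝ) 1)
    (Rfun Rinv : Fin U → ℝ → ℝ)
    (hmono : ∀ u, StrictMonoOn (Rfun u) (Set.Ici 0))
    (hcont : ∀ u, ContinuousOn (Rfun u) (Set.Ici 0))
    (hbij : ∀ u, Set.BijOn (Rfun u) (Set.Ici 0) (Set.Ici 0))
    (hinv_left : ∀ u b, 0 ≤ b → Rinv u (Rfun u b) = b)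
    (hinv_right : ∀ u x, 0 ≤ x → Rfun u (Rinv u x) = x)
    (hinv_nonneg : ∀ u x, 0 ≤ x → 0 ≤ Rinv u x)
    (a1 a2 a3 Treq : ℝ) (ha1 : 0 ≤ a1) (ha2 : 0 ≤ a2) (ha3 : 0 ≤ a3) (hTreq : 0 < Treq) :
    (∀ Btot RStot Ftot B Rs F,
      P4Feas U D ρ ζ Rfun Treq Btot RStot Ftot B Rs F →
      ∃ Btot' RStot' Ftot' B' Rs' F',
        P4Feas U D ρ ζ Rfun Treq Btot' RStot' Ftot' B' Rs' F' ∧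
        (∀ u, B' u = Rinv u (D u / Treq)) ∧
        Btot' = (∑ u, Rinv u (D u / Treq)) ∧
        J4 a1 a2 a3 Btot' RStot' Ftot' ≤ J4 a1 a2 a3 Btot RStot Ftot) ∧
    ((∃ Btot RStot Ftot B Rs F,
        P4Feas U D ρ ζ Rfun Treq Btot RStot Ftot B Rs F ∧
        ∀ Btot' RStot' Ftot' B' Rs' F',
          P4Feas U D ρ ζ Rfun Treq Btot' RStot' Ftot' B' Rs' F' →
          J4 a1 a2 a3 Btot RStot Ftot ≤ J4 a1 a2 a3 Btot' RStot' Ftot') →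
      (∃ Btot RStot Ftot B Rs F,
        P4Feas U D ρ ζ Rfun Treq Btot RStot Ftot B Rs F ∧
        (∀ u, B u = Rinv u (D u / Treq)) ∧
        Btot = (∑ u, Rinv u (D u / Treq)) ∧
        ∀ Btot' RStot' Ftot' B' Rs' F',
          P4Feas U D ρ ζ Rfun Treq Btot' RStot' Ftot' B' Rs' F' →
          J4 a1 a2 a3 Btot RStot Ftot ≤ J4 a1 a2 a3 Btot' RStot' Ftot')) := by

  have main : ∀ Btot RStot Ftot B Rs F,
      P4Feas U D ρ ζ Rfun Treq Btot RStot Ftot B Rs F →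
      ∃ Btot' RStot' Ftot' B' Rs' F',
        P4Feas U D ρ ζ Rfun Treq Btot' RStot' Ftot' B' Rs' F' ∧
        (∀ u, B' u = Rinv u (D u / Treq)) ∧
        Btot' = (∑ u, Rinv u (D u / Treq)) ∧
        J4 a1 a2 a3 Btot' RStot' Ftot' ≤ J4 a1 a2 a3 Btot RStot Ftot := by
    intro Btot RStot Ftot B Rs F hfeas
    obtain ⟨hB0, hRS0, hF0, hBu, hRsu, hFu, hrate, hband, hFeq, hsB, hsRs, hsF⟩ := hfeas
    have hr'pos : ∀ u, 0 < D u / Treq := fun u => div_pos (hD u) hTreq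
    have hr'nn : ∀ u, (0:ℝ) ≤ D u / Treq := fun u => (hr'pos u).le
    set B' : Fin U → ℝ := fun u => Rinv u (D u / Treq) with hB'def
    set Rs' : Fin U → ℝ :=
      fun u => max (ζ u * (D u / Treq)) (Rs u - (Rfun u (B u) - D u / Treq)) with hRs'def
    set F' : Fin U → ℝ := fun u => ρ u * (D u / Treq - Rs' u) / (1 - ζ u) with hF'def
    have hB'nn : ∀ u, 0 ≤ B' u := fun u => hinv_nonneg u _ (hr'nn u)
    have hrate' : ∀ u, Rfun u (B' u) = D u / Treq := fun u => hinv_right u _ (hr'nn u)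
    have hζ0 : ∀ u, 0 < ζ u := fun u => (hζ u).1
    have hζ1 : ∀ u, 0 < 1 - ζ u := fun u => sub_pos.mpr (hζ u).2
    have hRs'pos : ∀ u, 0 < Rs' u :=
      fun u => lt_max_of_lt_left (mul_pos (hζ0 u) (hr'pos u))
    have hRs'le : ∀ u, Rs' u ≤ D u / Treq := by
      intro u
      apply max_le
      · nlinarith [hζ0 u, (hζ u).2, hr'pos u]
      · have := (hband u).1
        linarith
    have hF'nn : ∀ u, 0 ≤ F' u := by
      intro u
      apply div_nonneg _ (hζ1 u).le
      have := hRs'le u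
      nlinarith [hρ u]
    have hRs'leRs : ∀ u, Rs' u ≤ Rs u := by
      intro u
      apply max_le
      · have h1 : ζ u * Rfun u (B u) ≤ Rs u := by
          have := (hband u).2
          rw [le_div_iff₀ (hζ0 u)] at this
          linarith [this]
        have h2 : ζ u * (D u / Treq) ≤ ζ u * Rfun u (B u) :=
          mul_le_mul_of_nonneg_left (hrate u) (hζ0 u).le
        linarith
      · have := hrate u; linarith
    have hF'leF : ∀ u, F' u ≤ F u := by
      intro u
      rw [hFeq u]
      apply div_le_div_of_nonneg_right _ (hζ1 u).le
      have h1 : Rs u - (Rfun u (B u) - D u / Treq) ≤ Rs' u := le_max_right _ _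
      nlinarith [hρ u]
    have hB'leB : ∀ u, B' u ≤ B u := by
      intro u
      by_contra h
      push_neg at h
      have := (hmono u) (Set.mem_Ici.mpr (hBu u)) (Set.mem_Ici.mpr (hB'nn u)) h
      rw [hrate' u] at this
      exact absurd (hrate u) (not_le.mpr this)
    have hsB' : (∑ u, B' u) ≤ ∑ u, B u := Finset.sum_le_sum (fun u _ => hB'leB u)
    have hsRs' : (∑ u, Rs' u) ≤ ∑ u, Rs u := Finset.sum_le_sum (fun u _ => hRs'leRs u)
    have hsF' : (∑ u, F' u) ≤ ∑ u, F u := Finset.sum_le_sum (fun u _ => hF'leF u)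
    refine ⟨∑ u, B' u, RStot, Ftot, B', Rs', F', ?_, fun u => rfl, rfl, ?_⟩
    · refine ⟨Finset.sum_nonneg (fun u _ => hB'nn u), hRS0, hF0, hB'nn, hRs'pos, hF'nn,
        ?_, ?_, ?_, le_refl _, le_trans hsRs' hsRs, le_trans hsF' hsF⟩
      · intro u; rw [hrate' u]
      · intro u
        rw [hrate' u]
        refine ⟨hRs'le u, ?_⟩
        rw [le_div_iff₀ (hζ0 u)]
        calc D u / Treq * ζ u = ζ u * (D u / Treq) := by ring
        _ ≤ Rs' u := le_max_left _ _
      · intro u; rw [hrate' u]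
    · unfold J4
      have h1 : a1 * (∑ u, B' u) ≤ a1 * Btot :=
        mul_le_mul_of_nonneg_left (le_trans hsB' hsB) ha1
      linarith
  refine ⟨main, ?_⟩
  rintro ⟨Btot, RStot, Ftot, B, Rs, F, hfeas, hmin⟩
  obtain ⟨Bt', RSt', Ft', B', Rs', F', hfeas', hBeq, hBteq, hJ⟩ :=
    main Btot RStot Ftot B Rs F hfeas
  exact ⟨Bt', RSt', Ft', B', Rs', F', hfeas', hBeq, hBteq,
    fun Bt2 RSt2 Ft2 B2 Rs2 F2 h2 => le_trans hJ (hmin _ _ _ _ _ _ h2)⟩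

end
end

section
/- Let x = (Btot, RStot, Ftot, (B_u), (Rs_u), (F_u)) be (P4)-feasible, and for each u set s_u = (D_u/T_req)/R_u(B_u), B_u' = R_u⁻¹(D_u/T_req), Rs_u' = s_u·Rs_u, F_u' = s_u·F_u, and define Btot' = Σ_u B_u', RStot' = Σ_u Rs_u', Ftot' = Σ_u F_u'. Then x' = (Btot', RStot', Ftot', (B_u'), (Rs_u'), (F_u')) is (P4)-feasible; moreover B_u' ≤ B_u, Rs_u' ≤ Rs_u and F_u' ≤ F_u for every u, Btot' ≤ Btot, RStot' ≤ RStot, Ftot' ≤ Ftot, and hence J4(x') ≤ J4(x). -/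
noncomputable section

/-- Scaling a (P4)-feasible point by `s_u = (D_u/T_req)/R_u(B_u)` yields a (P4)-feasible
point that is componentwise no larger and has no larger cost. -/
theorem p4_scaling_feasible
    (U : ℕ) (hU : 1 ≤ U)
    (D ρ ζ : Fin U → ℝ) (hD : ∀ u, 0 < D u) (hρ : ∀ u, 0 < ρ u)
    (hζ : ∀ u, ζ u ∈ Set.Ioo (0:ℝ) 1)
    (Rfun Rinv : Fin U → ℝ → ℝ)
    (hmono : ∀ u, StrictMonoOn (Rfun u) (Set.Ici 0))
    (hcont : ∀ u, ContinuousOn (Rfun u) (Set.Ici 0))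
    (hbij : ∀ u, Set.BijOn (Rfun u) (Set.Ici 0) (Set.Ici 0))
    (hinv_left : ∀ u b, 0 ≤ b → Rinv u (Rfun u b) = b)
    (hinv_right : ∀ u x, 0 ≤ x → Rfun u (Rinv u x) = x)
    (hinv_nonneg : ∀ u x, 0 ≤ x → 0 ≤ Rinv u x)
    (a1 a2 a3 Treq : ℝ) (ha1 : 0 ≤ a1) (ha2 : 0 ≤ a2) (ha3 : 0 ≤ a3) (hTreq : 0 < Treq)
    (Btot RStot Ftot : ℝ) (B Rs F : Fin U → ℝ)
    (hfeas : P4Feas U D ρ ζ Rfun Treq Btot RStot Ftot B Rs F)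
    (s B' Rs' F' : Fin U → ℝ) (Btot' RStot' Ftot' : ℝ)
    (hs : ∀ u, s u = (D u / Treq) / Rfun u (B u))
    (hB' : ∀ u, B' u = Rinv u (D u / Treq))
    (hRs' : ∀ u, Rs' u = s u * Rs u)
    (hF' : ∀ u, F' u = s u * F u)
    (hBtot' : Btot' = ∑ u, B' u)
    (hRStot' : RStot' = ∑ u, Rs' u)
    (hFtot' : Ftot' = ∑ u, F' u) :
    P4Feas U D ρ ζ Rfun Treq Btot' RStot' Ftot' B' Rs' F' ∧
    (∀ u, B' u ≤ B u ∧ Rs' u ≤ Rs u ∧ F' u ≤ F u) ∧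
    Btot' ≤ Btot ∧ RStot' ≤ RStot ∧ Ftot' ≤ Ftot ∧
    J4 a1 a2 a3 Btot' RStot' Ftot' ≤ J4 a1 a2 a3 Btot RStot Ftot := by
  obtain ⟨hB0, hRS0, hF0, hBnn, hRsPos, hFnn, hlat, hsand, hFeq, hBsum, hRSsum, hFsum⟩ := hfeas
  have hDT : ∀ u, 0 < D u / Treq := fun u => div_pos (hD u) hTreq
  have hRB : ∀ u, 0 < Rfun u (B u) := fun u => lt_of_lt_of_le (hDT u) (hlat u)
  have hs_pos : ∀ u, 0 < s u := fun u => by rw [hs u]; exact div_pos (hDT u) (hRB u)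
  have hs_le : ∀ u, s u ≤ 1 := fun u => by
    rw [hs u]; exact div_le_one_of_le₀ (hlat u) (le_of_lt (hRB u))
  have hRB' : ∀ u, Rfun u (B' u) = D u / Treq := fun u => by
    rw [hB' u]; exact hinv_right u _ (le_of_lt (hDT u))
  have hRB'eq : ∀ u, Rfun u (B' u) = s u * Rfun u (B u) := fun u => by
    rw [hRB' u, hs u, div_mul_cancel₀ _ (ne_of_gt (hRB u))]
  have hB'nn : ∀ u, 0 ≤ B' u := fun u => by
    rw [hB' u]; exact hinv_nonneg u _ (le_of_lt (hDT u))
  have hB'le : ∀ u, B' u ≤ B u := by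
    intro u
    by_contra h
    push_neg at h
    have := (hmono u) (Set.mem_Ici.2 (hBnn u)) (Set.mem_Ici.2 (hB'nn u)) h
    rw [hRB' u] at this
    exact absurd (hlat u) (not_le.2 this)
  have hRs'le : ∀ u, Rs' u ≤ Rs u := fun u => by
    rw [hRs' u]; exact mul_le_of_le_one_left (le_of_lt (hRsPos u)) (hs_le u)
  have hF'le : ∀ u, F' u ≤ F u := fun u => by
    rw [hF' u]; exact mul_le_of_le_one_left (hFnn u) (hs_le u)
  have hRs'pos : ∀ u, 0 < Rs' u := fun u => by
    rw [hRs' u]; exact mul_pos (hs_pos u) (hRsPos u)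
  have hF'nn : ∀ u, 0 ≤ F' u := fun u => by
    rw [hF' u]; exact mul_nonneg (le_of_lt (hs_pos u)) (hFnn u)
  have hBsum' : Btot' ≤ Btot := by
    rw [hBtot']
    exact le_trans (Finset.sum_le_sum fun u _ => hB'le u) hBsum
  have hRSsum' : RStot' ≤ RStot := by
    rw [hRStot']
    exact le_trans (Finset.sum_le_sum fun u _ => hRs'le u) hRSsum
  have hFsum' : Ftot' ≤ Ftot := by
    rw [hFtot']
    exact le_trans (Finset.sum_le_sum fun u _ => hF'le u) hFsum
  refine ⟨⟨?_, ?_, ?_, hB'nn, hRs'pos, hF'nn, ?_, ?_, ?_, ?_, ?_, ?_⟩,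
    fun u => ⟨hB'le u, hRs'le u, hF'le u⟩, hBsum', hRSsum', hFsum', ?_⟩
  · rw [hBtot']; exact Finset.sum_nonneg fun u _ => hB'nn u
  · rw [hRStot']; exact Finset.sum_nonneg fun u _ => le_of_lt (hRs'pos u)
  · rw [hFtot']; exact Finset.sum_nonneg fun u _ => hF'nn u
  · intro u; rw [hRB' u]
  · intro u
    constructor
    · rw [hRs' u, hRB'eq u]
      exact mul_le_mul_of_nonneg_left (hsand u).1 (le_of_lt (hs_pos u))
    · rw [hRs' u, hRB'eq u, mul_div_assoc]
      exact mul_le_mul_of_nonneg_left (hsand u).2 (le_of_lt (hs_pos u))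
  · intro u
    have hζ1 : (1 : ℝ) - ζ u ≠ 0 := by have := (hζ u).2; linarith
    rw [hF' u, hFeq u, hRB'eq u, hRs' u]
    field_simp
  · rw [hBtot']
  · rw [hRStot']
  · rw [hFtot']
  · unfold J4
    gcongr

end
end

section
/- Define, for every u, Rs_u* = (D_u/T_req)·(1 − (1−ζ_u)·I(ρ_u/(1−ζ_u) ≤ a2/a3)), and set RStot* = Σ_u Rs_u* and Ftot* = Σ_u ρ_u·(D_u/T_req)·I(ρ_u/(1−ζ_u) ≤ a2/a3). Then the point (RStot*, Ftot*, (Rs_u*)) is feasible for problem (P5), and for every feasible point (RStot, Ftot, (Rs_u)) of (P5) one has a2·RStot* + a3·Ftot* ≤ a2·RStot + a3·Ftot; that is, this point is an optimal solution of (P5). -/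
noncomputable section

lemma per_u_min (a2 a3 d ρ c Rs : ℝ) (ha2 : 0 < a2) (ha3 : 0 < a3)
    (hc : 0 < c) (hd : 0 < d)
    (hlo : (1 - c) * d ≤ Rs) (hhi : Rs ≤ d) :
    a2 * (d * (1 - c * (if ρ / c ≤ a2 / a3 then (1:ℝ) else 0)))
      + a3 * (ρ * d * (if ρ / c ≤ a2 / a3 then (1:ℝ) else 0))
    ≤ a2 * Rs + a3 * (ρ * (d - Rs) / c) := by
  split_ifs with h
  · have h1 : a3 * ρ ≤ a2 * c := by
      rw [div_le_div_iff₀ hc ha3] at h; linarith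
    rw [← sub_nonneg]
    have heq : a2 * Rs + a3 * (ρ * (d - Rs) / c) -
        (a2 * (d * (1 - c * 1)) + a3 * (ρ * d * 1))
        = (Rs - (1 - c) * d) * (a2 * c - a3 * ρ) / c := by
      field_simp; ring
    rw [heq]
    exact div_nonneg (mul_nonneg (by linarith) (by linarith)) hc.le
  · push_neg at h
    have h1 : a2 * c ≤ a3 * ρ := by
      rw [div_lt_div_iff₀ ha3 hc] at h; linarith
    rw [← sub_nonneg]
    have heq : a2 * Rs + a3 * (ρ * (d - Rs) / c) -
        (a2 * (d * (1 - c * 0)) + a3 * (ρ * d * 0))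
        = (d - Rs) * (a3 * ρ - a2 * c) / c := by
      field_simp; ring
    rw [heq]
    exact div_nonneg (mul_nonneg (by linarith) (by linarith)) hc.le

/-- Feasibility for problem (P5). -/
def P5Feas (U : ℕ) (D ρ ζ : Fin U → ℝ) (Treq : ℝ)
    (RStot Ftot : ℝ) (Rs : Fin U → ℝ) : Prop :=
  (∑ u, Rs u) ≤ RStot ∧
  (∑ u, ρ u * (D u / Treq - Rs u) / (1 - ζ u)) ≤ Ftot ∧
  (∀ u, ζ u * D u / Treq ≤ Rs u ∧ Rs u ≤ D u / Treq) ∧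
  0 ≤ RStot ∧ 0 ≤ Ftot

/-- The threshold-based point `Rs_u* = (D_u/T_req)(1 − (1−ζ_u)·I(ρ_u/(1−ζ_u) ≤ a2/a3))`,
`RStot* = Σ_u Rs_u*`, `Ftot* = Σ_u ρ_u(D_u/T_req)·I(ρ_u/(1−ζ_u) ≤ a2/a3)` is an optimal
solution of (P5). -/
theorem p5_optimal_solution
    (U : ℕ) (hU : 1 ≤ U)
    (D ρ ζ : Fin U → ℝ) (hD : ∀ u, 0 < D u) (hρ : ∀ u, 0 < ρ u)
    (hζ : ∀ u, ζ u ∈ Set.Ioo (0:ℝ) 1)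
    (a2 a3 Treq : ℝ) (ha2 : 0 < a2) (ha3 : 0 < a3) (hTreq : 0 < Treq) :
    P5Feas U D ρ ζ Treq
      (∑ u, (D u / Treq) *
        (1 - (1 - ζ u) * (if ρ u / (1 - ζ u) ≤ a2 / a3 then (1:ℝ) else 0)))
      (∑ u, ρ u * (D u / Treq) * (if ρ u / (1 - ζ u) ≤ a2 / a3 then (1:ℝ) else 0))
      (fun u => (D u / Treq) *
        (1 - (1 - ζ u) * (if ρ u / (1 - ζ u) ≤ a2 / a3 then (1:ℝ) else 0))) ∧
    (∀ RStot Ftot Rs, P5Feas U D ρ ζ Treq RStot Ftot Rs →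
      a2 * (∑ u, (D u / Treq) *
          (1 - (1 - ζ u) * (if ρ u / (1 - ζ u) ≤ a2 / a3 then (1:ℝ) else 0))) +
        a3 * (∑ u, ρ u * (D u / Treq) * (if ρ u / (1 - ζ u) ≤ a2 / a3 then (1:ℝ) else 0)) ≤
      a2 * RStot + a3 * Ftot) := by
  have hc : ∀ u, 0 < 1 - ζ u := fun u => by have := (hζ u).2; linarith
  have hd : ∀ u, 0 < D u / Treq := fun u => div_pos (hD u) hTreq
  set I : Fin U → ℝ := fun u => if ρ u / (1 - ζ u) ≤ a2 / a3 then (1:ℝ) else 0 with hI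
  have hkey : ∀ u, ρ u * (D u / Treq -
      (D u / Treq) * (1 - (1 - ζ u) * I u)) / (1 - ζ u)
      = ρ u * (D u / Treq) * I u := by
    intro u
    have h0 := (hc u).ne'
    field_simp
    ring
  have hbounds : ∀ u, ζ u * D u / Treq ≤ (D u / Treq) * (1 - (1 - ζ u) * I u) ∧
      (D u / Treq) * (1 - (1 - ζ u) * I u) ≤ D u / Treq := by
    intro u
    have hdu := hd u
    have hcu := hc u
    have hz := (hζ u).1
    have hrw : ζ u * D u / Treq = (D u / Treq) * ζ u := by ring
    constructor
    · rw [hrw]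
      simp only [hI]
      split_ifs <;> nlinarith
    · simp only [hI]
      split_ifs <;> nlinarith
  have hfeas : P5Feas U D ρ ζ Treq
      (∑ u, (D u / Treq) * (1 - (1 - ζ u) * I u))
      (∑ u, ρ u * (D u / Treq) * I u)
      (fun u => (D u / Treq) * (1 - (1 - ζ u) * I u)) := by
    refine ⟨le_refl _, le_of_eq (Finset.sum_congr rfl fun u _ => hkey u), hbounds, ?_, ?_⟩
    · apply Finset.sum_nonneg
      intro u _
      have hz := (hζ u).1
      have hdu := hD u
      have h0 : (0:ℝ) ≤ ζ u * D u / Treq := by positivity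
      linarith [(hbounds u).1]
    · apply Finset.sum_nonneg
      intro u _
      have := hd u
      have := (hρ u).le
      simp only [hI]
      split_ifs <;> nlinarith
  refine ⟨hfeas, ?_⟩
  intro RStot Ftot Rs hf
  obtain ⟨h1, h2, h3, h4, h5⟩ := hf
  have step1 : ∑ u, (a2 * ((D u / Treq) * (1 - (1 - ζ u) * I u))
      + a3 * (ρ u * (D u / Treq) * I u))
      ≤ ∑ u, (a2 * Rs u + a3 * (ρ u * (D u / Treq - Rs u) / (1 - ζ u))) := by
    apply Finset.sum_le_sum
    intro u _
    have hlo' : (1 - (1 - ζ u)) * (D u / Treq) ≤ Rs u := by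
      have := (h3 u).1
      have hrw : ζ u * D u / Treq = (1 - (1 - ζ u)) * (D u / Treq) := by ring
      linarith [hrw ▸ (h3 u).1]
    exact per_u_min a2 a3 (D u / Treq) (ρ u) (1 - ζ u) (Rs u) ha2 ha3 (hc u) (hd u)
      hlo' (h3 u).2
  calc a2 * (∑ u, (D u / Treq) * (1 - (1 - ζ u) * I u))
        + a3 * (∑ u, ρ u * (D u / Treq) * I u)
      = ∑ u, (a2 * ((D u / Treq) * (1 - (1 - ζ u) * I u))
        + a3 * (ρ u * (D u / Treq) * I u)) := by
        rw [Finset.mul_sum, Finset.mul_sum, ← Finset.sum_add_distrib]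
    _ ≤ ∑ u, (a2 * Rs u + a3 * (ρ u * (D u / Treq - Rs u) / (1 - ζ u))) := step1
    _ = a2 * (∑ u, Rs u) + a3 * (∑ u, ρ u * (D u / Treq - Rs u) / (1 - ζ u)) := by
        rw [Finset.mul_sum, Finset.mul_sum, ← Finset.sum_add_distrib]
    _ ≤ a2 * RStot + a3 * Ftot :=
        add_le_add (mul_le_mul_of_nonneg_left h1 ha2.le)
          (mul_le_mul_of_nonneg_left h2 ha3.le)

end
end

section
/- If a (P8)-feasible point (h_x, h_y, (B_u), (ν_u), (Q_u), (Pr_u), (θ_u)) minimizes Σ_u B_u over all (P8)-feasible points, then at this point all five constraints (b)–(f) hold with equality for every u: 2·log ν_u + 1/ν_u − 1 = D_u·log 2/(T_req·B_u); ν_u(ν_u − 1) = (p_u/σ²)·(c/(4πf))²·10^(((η_NLoS − η_LoS)·Pr_u − η_NLoS)/10)/Q_u; Q_u = (h_x − hx_u)² + (h_y − hy_u)² + H²; 1/Pr_u = 1 + a·exp(−b·(θ_u − a)); and sin θ_u = H/√Q_u. -/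
noncomputable section

/-- A point of problem (P8): per-user positivity/range conditions. -/
def P8Point (U : ℕ) (B ν Q Pr θ : Fin U → ℝ) : Prop :=
  (∀ u, 0 < B u) ∧ (∀ u, 1 < ν u) ∧ (∀ u, 0 < Q u) ∧
  (∀ u, Pr u ∈ Set.Ioc (0:ℝ) 1) ∧ (∀ u, θ u ∈ Set.Icc (0:ℝ) (Real.pi / 2))

/-- Feasibility for problem (P8): constraints (b)-(f). -/
def P8Feas (U : ℕ) (D p gx gy : Fin U → ℝ)
    (σ2 f c H Treq a b ηLoS ηNLoS : ℝ)
    (hx hy : ℝ) (B ν Q Pr θ : Fin U → ℝ) : Prop :=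
  P8Point U B ν Q Pr θ ∧
  (∀ u, D u * Real.log 2 / (Treq * B u) ≤ 2 * Real.log (ν u) + 1 / ν u - 1) ∧
  (∀ u, ν u * (ν u - 1) ≤
    (p u / σ2) * (c / (4 * Real.pi * f)) ^ 2 *
      (10:ℝ) ^ (((ηNLoS - ηLoS) * Pr u - ηNLoS) / 10) / Q u) ∧
  (∀ u, (hx - gx u) ^ 2 + (hy - gy u) ^ 2 + H ^ 2 ≤ Q u) ∧
  (∀ u, 1 + a * Real.exp (-b * (θ u - a)) ≤ 1 / Pr u) ∧
  (∀ u, Real.sin (θ u) ≤ H / Real.sqrt (Q u))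

lemma glog_lt {x y : ℝ} (hx : 1 ≤ x) (hxy : x < y) :
    2 * Real.log x + 1 / x - 1 < 2 * Real.log y + 1 / y - 1 := by
  have hx0 : (0:ℝ) < x := lt_of_lt_of_le one_pos hx
  have hy0 : (0:ℝ) < y := hx0.trans hxy
  have h1 : Real.log (x / y) ≤ x / y - 1 := Real.log_le_sub_one_of_pos (by positivity)
  rw [Real.log_div (ne_of_gt hx0) (ne_of_gt hy0)] at h1
  have hx2 : x / y - 1 = -((1/x - 1/y) * x) := by field_simp; ring
  rw [hx2] at h1
  have hApos : 0 < 1/x - 1/y := by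
    have := one_div_lt_one_div_of_lt hx0 hxy
    linarith
  nlinarith [mul_pos hApos (sub_pos.mpr hxy)]

lemma gpos {x : ℝ} (hx : 1 < x) : 0 < 2 * Real.log x + 1 / x - 1 := by
  have := glog_lt le_rfl hx
  simpa using this

lemma nusol {R : ℝ} (hR : 0 < R) :
    1 < (1 + Real.sqrt (1 + 4 * R)) / 2 ∧
    ((1 + Real.sqrt (1 + 4 * R)) / 2) * (((1 + Real.sqrt (1 + 4 * R)) / 2) - 1) = R := by
  have hs : Real.sqrt (1 + 4 * R) ^ 2 = 1 + 4 * R := Real.sq_sqrt (by linarith)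
  have hs0 : 0 ≤ Real.sqrt (1 + 4 * R) := Real.sqrt_nonneg _
  exact ⟨by nlinarith, by nlinarith⟩

lemma contra (U : ℕ) (D p gx gy : Fin U → ℝ)
    (σ2 f c H Treq a b ηLoS ηNLoS hx hy : ℝ)
    (B ν Q Pr θ : Fin U → ℝ)
    (hfeas : P8Feas U D p gx gy σ2 f c H Treq a b ηLoS ηNLoS hx hy B ν Q Pr θ)
    (hopt : ∀ hx' hy' B' ν' Q' Pr' θ',
      P8Feas U D p gx gy σ2 f c H Treq a b ηLoS ηNLoS hx' hy' B' ν' Q' Pr' θ' →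
      (∑ u, B u) ≤ ∑ u, B' u)
    (u0 : Fin U) (Bn νn Qn Prn θn : ℝ)
    (hBn : 0 < Bn) (hνn : 1 < νn) (hQn : 0 < Qn)
    (hPrn : Prn ∈ Set.Ioc (0:ℝ) 1) (hθn : θn ∈ Set.Icc (0:ℝ) (Real.pi / 2))
    (hb' : D u0 * Real.log 2 / (Treq * Bn) ≤ 2 * Real.log νn + 1 / νn - 1)
    (hc' : νn * (νn - 1) ≤
      (p u0 / σ2) * (c / (4 * Real.pi * f)) ^ 2 *
        (10:ℝ) ^ (((ηNLoS - ηLoS) * Prn - ηNLoS) / 10) / Qn)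
    (hd' : (hx - gx u0) ^ 2 + (hy - gy u0) ^ 2 + H ^ 2 ≤ Qn)
    (he' : 1 + a * Real.exp (-b * (θn - a)) ≤ 1 / Prn)
    (hf' : Real.sin θn ≤ H / Real.sqrt Qn)
    (hlt : Bn < B u0) : False := by
  classical
  obtain ⟨⟨hB, hν, hQ, hPr, hθ⟩, hbf, hcf, hdf, hef, hff⟩ := hfeas
  set B' := Function.update B u0 Bn with hB'
  set ν' := Function.update ν u0 νn with hν'
  set Q' := Function.update Q u0 Qn with hQ'
  set Pr' := Function.update Pr u0 Prn with hPr'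
  set θ' := Function.update θ u0 θn with hθ'
  have happ : ∀ (g : Fin U → ℝ) (v : ℝ) (u : Fin U),
      Function.update g u0 v u = if u = u0 then v else g u := by
    intro g v u; simp [Function.update_apply]
  have hfeas' : P8Feas U D p gx gy σ2 f c H Treq a b ηLoS ηNLoS hx hy B' ν' Q' Pr' θ' := by
    refine ⟨⟨?_, ?_, ?_, ?_, ?_⟩, ?_, ?_, ?_, ?_, ?_⟩ <;>
      intro u <;> by_cases h : u = u0 <;>
        simp only [hB', hν', hQ', hPr', hθ', happ, h, if_true, if_false, if_pos, if_neg] <;>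
        first
          | exact hBn | exact hνn | exact hQn | exact hPrn | exact hθn
          | exact hb' | exact hc' | exact hd' | exact he' | exact hf'
          | exact hB u | exact hν u | exact hQ u | exact hPr u | exact hθ u
          | exact hbf u | exact hcf u | exact hdf u | exact hef u | exact hff u
  have hge := hopt hx hy B' ν' Q' Pr' θ' hfeas'
  have hltsum : ∑ u, B' u < ∑ u, B u := by
    apply Finset.sum_lt_sum
    · intro i _
      by_cases h : i = u0
      · subst h; simp [hB', hlt.le]
      · simp [hB', happ, h]
    · exact ⟨u0, Finset.mem_univ _, by simp [hB', hlt]⟩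
  linarith

lemma main_contra (U : ℕ) (D p gx gy : Fin U → ℝ)
    (σ2 f c H Treq a b ηLoS ηNLoS hx hy : ℝ)
    (hTreq : 0 < Treq)
    (B ν Q Pr θ : Fin U → ℝ)
    (hfeas : P8Feas U D p gx gy σ2 f c H Treq a b ηLoS ηNLoS hx hy B ν Q Pr θ)
    (hopt : ∀ hx' hy' B' ν' Q' Pr' θ',
      P8Feas U D p gx gy σ2 f c H Treq a b ηLoS ηNLoS hx' hy' B' ν' Q' Pr' θ' →
      (∑ u, B u) ≤ ∑ u, B' u)
    (u0 : Fin U) (hD0 : 0 < D u0) (Qn Prn θn : ℝ)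
    (hQn : 0 < Qn)
    (hPrn : Prn ∈ Set.Ioc (0:ℝ) 1) (hθn : θn ∈ Set.Icc (0:ℝ) (Real.pi / 2))
    (hstrict : ν u0 * (ν u0 - 1) <
      (p u0 / σ2) * (c / (4 * Real.pi * f)) ^ 2 *
        (10:ℝ) ^ (((ηNLoS - ηLoS) * Prn - ηNLoS) / 10) / Qn)
    (hd' : (hx - gx u0) ^ 2 + (hy - gy u0) ^ 2 + H ^ 2 ≤ Qn)
    (he' : 1 + a * Real.exp (-b * (θn - a)) ≤ 1 / Prn)
    (hf' : Real.sin θn ≤ H / Real.sqrt Qn) : False := by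
  obtain ⟨⟨hB, hν, hQ, hPr, hθ⟩, hbf, hcf, hdf, hef, hff⟩ := hfeas
  set R := (p u0 / σ2) * (c / (4 * Real.pi * f)) ^ 2 *
      (10:ℝ) ^ (((ηNLoS - ηLoS) * Prn - ηNLoS) / 10) / Qn with hR
  have hν1 := hν u0
  have hRpos : 0 < R := lt_trans (by nlinarith) hstrict
  obtain ⟨hνn1, hνneq⟩ := nusol hRpos
  set νn := (1 + Real.sqrt (1 + 4 * R)) / 2
  have hνlt : ν u0 < νn := by
    by_contra hle
    push_neg at hle
    have : νn * (νn - 1) ≤ ν u0 * (ν u0 - 1) := by nlinarith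
    rw [hνneq] at this
    linarith
  have hg : 2 * Real.log (ν u0) + 1 / ν u0 - 1 < 2 * Real.log νn + 1 / νn - 1 :=
    glog_lt hν1.le hνlt
  have hgn : 0 < 2 * Real.log νn + 1 / νn - 1 := gpos hνn1
  set G := 2 * Real.log νn + 1 / νn - 1 with hG
  set Bn := D u0 * Real.log 2 / (Treq * G) with hBndef
  have hlog2 : (0:ℝ) < Real.log 2 := Real.log_pos (by norm_num)
  have hBn : 0 < Bn := by positivity
  have hBlt : Bn < B u0 := by
    have h1 : D u0 * Real.log 2 / (Treq * B u0) < G := lt_of_le_of_lt (hbf u0) hg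
    rw [div_lt_iff₀ (mul_pos hTreq (hB u0))] at h1
    rw [hBndef, div_lt_iff₀ (mul_pos hTreq hgn)]
    nlinarith
  have hb' : D u0 * Real.log 2 / (Treq * Bn) ≤ G := by
    have : D u0 * Real.log 2 / (Treq * Bn) = G := by
      rw [hBndef]
      field_simp
    exact le_of_eq this
  exact contra U D p gx gy σ2 f c H Treq a b ηLoS ηNLoS hx hy B ν Q Pr θ
    ⟨⟨hB, hν, hQ, hPr, hθ⟩, hbf, hcf, hdf, hef, hff⟩ hopt u0 Bn νn Qn Prn θn
    hBn hνn1 hQn hPrn hθn hb' (le_of_eq hνneq) hd' he' hf' hBlt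


lemma econtra (U : ℕ) (D p gx gy : Fin U → ℝ)
    (σ2 f c H Treq a b ηLoS ηNLoS hx hy : ℝ)
    (hσ2 : 0 < σ2) (hf : 0 < f) (hc : 0 < c) (hTreq : 0 < Treq)
    (ha : 0 < a) (hb : 0 < b) (hη : ηLoS < ηNLoS)
    (B ν Q Pr θ : Fin U → ℝ)
    (hfeas : P8Feas U D p gx gy σ2 f c H Treq a b ηLoS ηNLoS hx hy B ν Q Pr θ)
    (hopt : ∀ hx' hy' B' ν' Q' Pr' θ',
      P8Feas U D p gx gy σ2 f c H Treq a b ηLoS ηNLoS hx' hy' B' ν' Q' Pr' θ' →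
      (∑ u, B u) ≤ ∑ u, B' u)
    (u0 : Fin U) (hD0 : 0 < D u0) (hp0 : 0 < p u0) (θn : ℝ)
    (hθn : θn ∈ Set.Icc (0:ℝ) (Real.pi / 2))
    (hfn : Real.sin θn ≤ H / Real.sqrt (Q u0))
    (hEn : 1 + a * Real.exp (-b * (θn - a)) < 1 / Pr u0) : False := by
  obtain ⟨⟨hB, hν, hQ, hPr, hθ⟩, hbf, hcf, hdf, hef, hff⟩ := hfeas
  set E := 1 + a * Real.exp (-b * (θn - a)) with hE
  have hexp : 0 < Real.exp (-b * (θn - a)) := Real.exp_pos _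
  have hE1 : 1 < E := by nlinarith
  set Prn := 1 / E with hPrn
  have hPrn0 : 0 < Prn := by positivity
  have hPrn1 : Prn ≤ 1 := by
    rw [hPrn, div_le_one (by linarith)]; linarith
  have he' : 1 + a * Real.exp (-b * (θn - a)) ≤ 1 / Prn := by
    rw [hPrn, one_div_one_div]
  have hPrlt : Pr u0 < Prn := by
    have h1 : 1 / (1 / Pr u0) < 1 / E :=
      one_div_lt_one_div_of_lt (by linarith) hEn
    rwa [one_div_one_div] at h1
  have hexp2 : ((ηNLoS - ηLoS) * Pr u0 - ηNLoS) / 10 <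
      ((ηNLoS - ηLoS) * Prn - ηNLoS) / 10 := by
    have := mul_lt_mul_of_pos_left hPrlt (by linarith : (0:ℝ) < ηNLoS - ηLoS)
    linarith
  have hpow : (10:ℝ) ^ (((ηNLoS - ηLoS) * Pr u0 - ηNLoS) / 10) <
      (10:ℝ) ^ (((ηNLoS - ηLoS) * Prn - ηNLoS) / 10) :=
    (Real.rpow_lt_rpow_left_iff (by norm_num : (1:ℝ) < 10)).mpr hexp2
  have hA : 0 < (p u0 / σ2) * (c / (4 * Real.pi * f)) ^ 2 := by
    have h1 : 0 < p u0 / σ2 := div_pos hp0 hσ2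
    have h2 : 0 < c / (4 * Real.pi * f) := div_pos hc (by positivity)
    positivity
  have hstrict : ν u0 * (ν u0 - 1) <
      (p u0 / σ2) * (c / (4 * Real.pi * f)) ^ 2 *
        (10:ℝ) ^ (((ηNLoS - ηLoS) * Prn - ηNLoS) / 10) / Q u0 := by
    refine lt_of_le_of_lt (hcf u0) ?_
    rw [div_lt_div_iff₀ (hQ u0) (hQ u0)]
    have := mul_lt_mul_of_pos_left hpow hA
    nlinarith [hQ u0]
  exact main_contra U D p gx gy σ2 f c H Treq a b ηLoS ηNLoS hx hy hTreq
    B ν Q Pr θ ⟨⟨hB, hν, hQ, hPr, hθ⟩, hbf, hcf, hdf, hef, hff⟩ hopt u0 hD0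
    (Q u0) Prn θn (hQ u0) ⟨hPrn0, hPrn1⟩ hθn hstrict (hdf u0) he' hfn

/-- At any (P8)-feasible point minimizing `Σ_u B_u`, all five constraints (b)-(f) hold
with equality for every user. -/
theorem p8_constraints_tight_at_optimum
    (U : ℕ) (hU : 1 ≤ U)
    (D p : Fin U → ℝ) (hD : ∀ u, 0 < D u) (hp : ∀ u, 0 < p u)
    (gx gy : Fin U → ℝ)
    (σ2 f c H Treq a b ηLoS ηNLoS : ℝ)
    (hσ2 : 0 < σ2) (hf : 0 < f) (hc : 0 < c) (hH : 0 < H) (hTreq : 0 < Treq)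
    (ha : 0 < a) (hb : 0 < b) (hη : ηLoS < ηNLoS)
    (hx hy : ℝ) (B ν Q Pr θ : Fin U → ℝ)
    (hfeas : P8Feas U D p gx gy σ2 f c H Treq a b ηLoS ηNLoS hx hy B ν Q Pr θ)
    (hopt : ∀ hx' hy' B' ν' Q' Pr' θ',
      P8Feas U D p gx gy σ2 f c H Treq a b ηLoS ηNLoS hx' hy' B' ν' Q' Pr' θ' →
      (∑ u, B u) ≤ ∑ u, B' u) :
    ∀ u,
      2 * Real.log (ν u) + 1 / ν u - 1 = D u * Real.log 2 / (Treq * B u) ∧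
      ν u * (ν u - 1) =
        (p u / σ2) * (c / (4 * Real.pi * f)) ^ 2 *
          (10:ℝ) ^ (((ηNLoS - ηLoS) * Pr u - ηNLoS) / 10) / Q u ∧
      Q u = (hx - gx u) ^ 2 + (hy - gy u) ^ 2 + H ^ 2 ∧
      1 / Pr u = 1 + a * Real.exp (-b * (θ u - a)) ∧
      Real.sin (θ u) = H / Real.sqrt (Q u) := by
  intro u
  obtain ⟨⟨hB, hν, hQ, hPr, hθ⟩, hbf, hcf, hdf, hef, hff⟩ := hfeas
  have hfeas' : P8Feas U D p gx gy σ2 f c H Treq a b ηLoS ηNLoS hx hy B ν Q Pr θ :=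
    ⟨⟨hB, hν, hQ, hPr, hθ⟩, hbf, hcf, hdf, hef, hff⟩
  have hlog2 : (0:ℝ) < Real.log 2 := Real.log_pos (by norm_num)
  refine ⟨?_, ?_, ?_, ?_, ?_⟩
  · -- (b) equality
    by_contra hne
    have hlt : D u * Real.log 2 / (Treq * B u) < 2 * Real.log (ν u) + 1 / ν u - 1 :=
      (hbf u).lt_of_ne (fun h => hne h.symm)
    set G := 2 * Real.log (ν u) + 1 / ν u - 1 with hG
    have hgn : 0 < G := gpos (hν u)
    set Bn := D u * Real.log 2 / (Treq * G) with hBndef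
    have hD0 := hD u
    have hBn : 0 < Bn := by positivity
    have hBlt : Bn < B u := by
      rw [div_lt_iff₀ (mul_pos hTreq (hB u))] at hlt
      rw [hBndef, div_lt_iff₀ (mul_pos hTreq hgn)]
      nlinarith
    have hb' : D u * Real.log 2 / (Treq * Bn) ≤ G := by
      have heq : D u * Real.log 2 / (Treq * Bn) = G := by
        rw [hBndef]; field_simp
      exact le_of_eq heq
    exact contra U D p gx gy σ2 f c H Treq a b ηLoS ηNLoS hx hy B ν Q Pr θ
      hfeas' hopt u Bn (ν u) (Q u) (Pr u) (θ u)
      hBn (hν u) (hQ u) (hPr u) (hθ u) hb' (hcf u) (hdf u) (hef u) (hff u) hBlt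
  · -- (c) equality
    by_contra hne
    have hlt : ν u * (ν u - 1) <
        (p u / σ2) * (c / (4 * Real.pi * f)) ^ 2 *
          (10:ℝ) ^ (((ηNLoS - ηLoS) * Pr u - ηNLoS) / 10) / Q u :=
      (hcf u).lt_of_ne hne
    exact main_contra U D p gx gy σ2 f c H Treq a b ηLoS ηNLoS hx hy hTreq
      B ν Q Pr θ hfeas' hopt u (hD u) (Q u) (Pr u) (θ u) (hQ u) (hPr u) (hθ u)
      hlt (hdf u) (hef u) (hff u)
  · -- (d) equality
    by_contra hne
    have hlt : (hx - gx u) ^ 2 + (hy - gy u) ^ 2 + H ^ 2 < Q u :=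
      (hdf u).lt_of_ne (fun h => hne h.symm)
    set Qn := (hx - gx u) ^ 2 + (hy - gy u) ^ 2 + H ^ 2 with hQndef
    have hQn : 0 < Qn := by positivity
    have hA : 0 < (p u / σ2) * (c / (4 * Real.pi * f)) ^ 2 *
        (10:ℝ) ^ (((ηNLoS - ηLoS) * Pr u - ηNLoS) / 10) := by
      have h1 : 0 < p u / σ2 := div_pos (hp u) hσ2
      have h2 : 0 < c / (4 * Real.pi * f) := div_pos hc (by positivity)
      have h3 : (0:ℝ) < (10:ℝ) ^ (((ηNLoS - ηLoS) * Pr u - ηNLoS) / 10) :=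
        Real.rpow_pos_of_pos (by norm_num) _
      positivity
    have hstrict : ν u * (ν u - 1) <
        (p u / σ2) * (c / (4 * Real.pi * f)) ^ 2 *
          (10:ℝ) ^ (((ηNLoS - ηLoS) * Pr u - ηNLoS) / 10) / Qn := by
      refine lt_of_le_of_lt (hcf u) ?_
      exact div_lt_div_of_pos_left hA hQn hlt
    have hsq : Real.sqrt Qn ≤ Real.sqrt (Q u) := Real.sqrt_le_sqrt hlt.le
    have hsqn : 0 < Real.sqrt Qn := Real.sqrt_pos.mpr hQn
    have hf' : Real.sin (θ u) ≤ H / Real.sqrt Qn := by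
      refine le_trans (hff u) ?_
      exact div_le_div_of_nonneg_left hH.le hsqn hsq
    exact main_contra U D p gx gy σ2 f c H Treq a b ηLoS ηNLoS hx hy hTreq
      B ν Q Pr θ hfeas' hopt u (hD u) Qn (Pr u) (θ u) hQn (hPr u) (hθ u)
      hstrict (le_of_eq rfl) (hef u) hf'
  · -- (e) equality
    by_contra hne
    have hlt : 1 + a * Real.exp (-b * (θ u - a)) < 1 / Pr u :=
      (hef u).lt_of_ne (fun h => hne h.symm)
    exact econtra U D p gx gy σ2 f c H Treq a b ηLoS ηNLoS hx hy
      hσ2 hf hc hTreq ha hb hη B ν Q Pr θ hfeas' hopt u (hD u) (hp u)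
      (θ u) (hθ u) (hff u) hlt
  · -- (f) equality
    by_contra hne
    have hlt : Real.sin (θ u) < H / Real.sqrt (Q u) :=
      (hff u).lt_of_ne hne
    have hsqQ : 0 < Real.sqrt (Q u) := Real.sqrt_pos.mpr (hQ u)
    have hHQ : H ≤ Real.sqrt (Q u) := by
      have h1 : H ^ 2 ≤ Q u := by
        nlinarith [hdf u, sq_nonneg (hx - gx u), sq_nonneg (hy - gy u)]
      have h2 := Real.sqrt_le_sqrt h1
      rwa [Real.sqrt_sq hH.le] at h2
    set s := H / Real.sqrt (Q u) with hsdef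
    have hs0 : 0 < s := div_pos hH hsqQ
    have hs1 : s ≤ 1 := by rw [hsdef, div_le_one hsqQ]; exact hHQ
    set θn := Real.arcsin s with hθndef
    have hsin : Real.sin θn = s := Real.sin_arcsin (by linarith) hs1
    have hθn : θn ∈ Set.Icc (0:ℝ) (Real.pi / 2) :=
      ⟨Real.arcsin_nonneg.mpr hs0.le, Real.arcsin_le_pi_div_two s⟩
    have hθlt : θ u < θn := by
      by_contra hle
      push_neg at hle
      have hmem1 : θn ∈ Set.Icc (-(Real.pi/2)) (Real.pi/2) := Real.arcsin_mem_Icc s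
      have hmem2 : θ u ∈ Set.Icc (-(Real.pi/2)) (Real.pi/2) := by
        have hpi := Real.pi_pos
        exact ⟨by linarith [(hθ u).1], (hθ u).2⟩
      have hmono := Real.strictMonoOn_sin.monotoneOn hmem1 hmem2 hle
      rw [hsin] at hmono
      linarith
    have hEn : 1 + a * Real.exp (-b * (θn - a)) < 1 / Pr u := by
      have h1 : -b * (θn - a) < -b * (θ u - a) := by nlinarith
      have h2 : Real.exp (-b * (θn - a)) < Real.exp (-b * (θ u - a)) :=
        Real.exp_lt_exp.mpr h1
      have h3 : a * Real.exp (-b * (θn - a)) < a * Real.exp (-b * (θ u - a)) :=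
        mul_lt_mul_of_pos_left h2 ha
      linarith [hef u]
    have hfn : Real.sin θn ≤ H / Real.sqrt (Q u) := le_of_eq (by rw [hsin])
    exact econtra U D p gx gy σ2 f c H Treq a b ηLoS ηNLoS hx hy
      hσ2 hf hc hTreq ha hb hη B ν Q Pr θ hfeas' hopt u (hD u) (hp u)
      θn hθn hfn hEn

end
end

section
/- Let B ≥ 0 with R(B) > 0, Rs > 0 and F ≥ 0, and define (B', Rs', F') by cases: if R(B) < Rs, set (B', Rs', F') = (B, R(B), 0); if Rs ≤ R(B) < Rs/ζ and F/ρ < (R(B)−Rs)/(1−ζ), set (B', Rs', F') = (R⁻¹(Rs + (1−ζ)F/ρ), Rs, F); if Rs ≤ R(B) < Rs/ζ and F/ρ ≥ (R(B)−Rs)/(1−ζ), set (B', Rs', F') = (B, Rs, ρ(R(B)−Rs)/(1−ζ)); if R(B) ≥ Rs/ζ and F/ρ < Rs/ζ, set (B', Rs', F') = (R⁻¹(Rs + (1−ζ)F/ρ), Rs, F); if R(B) ≥ Rs/ζ and F/ρ ≥ Rs/ζ, set (B', Rs', F') = (R⁻¹(Rs/ζ), Rs, ρRs/ζ). Then B'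 ≤ B, Rs' ≤ Rs, F' ≤ F; moreover Rs' ≤ R(B') ≤ Rs'/ζ, F' = ρ(R(B') − Rs')/(1−ζ), Topt(R(B'), Rs', F') ≤ Topt(R(B), Rs, F), and Vopt(R(B'), Rs', F') = 0. -/
noncomputable section


/-- The case-defined mapping `(B,Rs,F) ↦ (B',Rs',F')` is componentwise non-increasing,
lands in the region `Rs' ≤ R(B') ≤ Rs'/ζ`, `F' = ρ(R(B')−Rs')/(1−ζ)`, does not increase
the optimized latency, and needs no storage. -/
theorem reduction_to_balanced_region
    (D ρ ζ : ℝ) (hD : 0 < D) (hρ : 0 < ρ) (hζ : ζ ∈ Set.Ioo (0:ℝ) 1)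
    (R Rinv : ℝ → ℝ)
    (hmono : StrictMonoOn R (Set.Ici 0))
    (hcont : ContinuousOn R (Set.Ici 0))
    (hbij : Set.BijOn R (Set.Ici 0) (Set.Ici 0))
    (hinv_left : ∀ b, 0 ≤ b → Rinv (R b) = b)
    (hinv_right : ∀ x, 0 ≤ x → R (Rinv x) = x)
    (hinv_nonneg : ∀ x, 0 ≤ x → 0 ≤ Rinv x)
    (B Rs F : ℝ) (hB : 0 ≤ B) (hRB : 0 < R B) (hRs : 0 < Rs) (hF : 0 ≤ F)
    (B' Rs' F' : ℝ)
    (hB' : B' =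
      if R B < Rs then B
      else if R B < Rs / ζ then
        if F / ρ < (R B - Rs) / (1 - ζ) then Rinv (Rs + (1 - ζ) * F / ρ) else B
      else
        if F / ρ < Rs / ζ then Rinv (Rs + (1 - ζ) * F / ρ) else Rinv (Rs / ζ))
    (hRs' : Rs' = if R B < Rs then R B else Rs)
    (hF' : F' =
      if R B < Rs then 0
      else if R B < Rs / ζ then
        if F / ρ < (R B - Rs) / (1 - ζ) then F else ρ * (R B - Rs) / (1 - ζ)
      else
        if F / ρ < Rs / ζ then F else ρ * Rs / ζ) :
    B' ≤ B ∧ Rs' ≤ Rs ∧ F' ≤ F ∧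
    Rs' ≤ R B' ∧ R B' ≤ Rs' / ζ ∧
    F' = ρ * (R B' - Rs') / (1 - ζ) ∧
    Topt D ρ ζ (R B') Rs' F' ≤ Topt D ρ ζ (R B) Rs F ∧
    Vopt D ρ ζ (R B') Rs' F' = 0 := by
  obtain ⟨hζ0, hζ1⟩ := hζ
  have h1ζ : (0:ℝ) < 1 - ζ := by linarith
  have hRsζ : Rs < Rs / ζ := by
    rw [lt_div_iff₀ hζ0]; nlinarith
  have hle_of_Rle : ∀ x, 0 ≤ x → R x ≤ R B → x ≤ B := by
    intro x hx hR
    by_contra h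
    exact absurd (hmono hB hx (lt_of_not_ge h)) (not_lt.2 hR)
  subst hB' hRs' hF'
  by_cases h1 : R B < Rs
  · simp only [if_pos h1]
    have hRBζ : R B ≤ R B / ζ := by
      rw [le_div_iff₀ hζ0]; nlinarith
    refine ⟨le_refl B, le_of_lt h1, hF, le_refl _, hRBζ, by simp, ?_, ?_⟩
    · have hc1 : ¬ R B < R B := lt_irrefl _
      have hc2 : R B < R B / ζ := by rw [lt_div_iff₀ hζ0]; nlinarith
      have hc3 : ¬ (0:ℝ) / ρ < (R B - R B) / (1 - ζ) := by simp
      simp only [Topt, if_neg hc1, if_pos hc2, if_neg hc3, if_pos h1, le_refl]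
    · have hc1 : ¬ R B < R B := lt_irrefl _
      have hc2 : R B < R B / ζ := by rw [lt_div_iff₀ hζ0]; nlinarith
      have hc3 : ¬ (0:ℝ) / ρ < (R B - R B) / (1 - ζ) := by simp
      simp only [Vopt, if_neg hc1, if_pos hc2, if_neg hc3]
  · push_neg at h1
    by_cases h2 : R B < Rs / ζ
    · by_cases h3 : F / ρ < (R B - Rs) / (1 - ζ)
      · -- case 2
        simp only [if_neg (not_lt.2 h1), if_pos h2, if_pos h3]
        set x : ℝ := Rs + (1 - ζ) * F / ρ with hx
        have hx0 : 0 ≤ x := by positivity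
        have hRx : R (Rinv x) = x := hinv_right x hx0
        have hxlt : x < R B := by
          have h5 : (1 - ζ) * F / ρ < R B - Rs := by
            rw [div_lt_iff₀ hρ]
            rw [div_lt_div_iff₀ hρ h1ζ] at h3
            nlinarith
          rw [hx]; linarith
        have hBle : Rinv x ≤ B := by
          refine hle_of_Rle _ (hinv_nonneg x hx0) ?_
          rw [hRx]; exact le_of_lt hxlt
        have hRsx : Rs ≤ x := by
          have : 0 ≤ (1 - ζ) * F / ρ := by positivity
          rw [hx]; linarith
        have hxζ : x ≤ Rs / ζ := le_of_lt (lt_trans hxlt h2)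
        have hFx : ¬ F / ρ < (x - Rs) / (1 - ζ) := by
          have : F / ρ = (x - Rs) / (1 - ζ) := by rw [hx]; field_simp; ring
          rw [← this]; exact lt_irrefl _
        refine ⟨hBle, le_refl Rs, le_refl F, ?_, ?_, ?_, ?_, ?_⟩
        · rw [hRx]; exact hRsx
        · rw [hRx]; exact hxζ
        · rw [hRx, hx]; field_simp; ring
        · have e1 : Topt D ρ ζ (R (Rinv x)) Rs F = D / x := by
            simp only [Topt, hRx, if_neg (not_lt.2 hRsx), if_pos (lt_trans hxlt h2), if_neg hFx]
          have e2 : Topt D ρ ζ (R B) Rs F = D * ρ / (F * (1 - ζ) + ρ * Rs) := by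
            simp only [Topt, if_neg (not_lt.2 h1), if_pos h2, if_pos h3]
          rw [e1, e2]
          apply le_of_eq
          have hden : 0 < F * (1 - ζ) + ρ * Rs :=
            add_pos_of_nonneg_of_pos (mul_nonneg hF h1ζ.le) (mul_pos hρ hRs)
          have hxpos : 0 < x := lt_of_lt_of_le hRs hRsx
          rw [div_eq_div_iff hxpos.ne' hden.ne', hx]
          field_simp
          ring
        · simp only [Vopt, hRx, if_neg (not_lt.2 hRsx), if_pos (lt_trans hxlt h2), if_neg hFx]
      · -- case 3
        push_neg at h3
        simp only [if_neg (not_lt.2 h1), if_pos h2, if_neg (not_lt.2 h3)]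
        have hF'le : ρ * (R B - Rs) / (1 - ζ) ≤ F := by
          rw [div_le_iff₀ h1ζ]
          rw [div_le_div_iff₀ h1ζ hρ] at h3
          nlinarith
        have hkey : (ρ * (R B - Rs) / (1 - ζ)) / ρ = (R B - Rs) / (1 - ζ) := by
          field_simp
        have hc : ¬ ρ * (R B - Rs) / (1 - ζ) / ρ < (R B - Rs) / (1 - ζ) := by
          rw [hkey]; exact lt_irrefl _
        refine ⟨le_refl B, le_refl Rs, hF'le, h1, le_of_lt h2, by trivial, ?_, ?_⟩
        · simp only [Topt, if_neg (not_lt.2 h1), if_pos h2, if_neg hc, if_neg (not_lt.2 h3),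
            le_refl]
        · simp only [Vopt, if_neg (not_lt.2 h1), if_pos h2, if_neg hc]
    · push_neg at h2
      by_cases h4 : F / ρ < Rs / ζ
      · -- case 4
        simp only [if_neg (not_lt.2 h1), if_neg (not_lt.2 h2), if_pos h4]
        set x : ℝ := Rs + (1 - ζ) * F / ρ with hx
        have hx0 : 0 ≤ x := by positivity
        have hRx : R (Rinv x) = x := hinv_right x hx0
        have hxlt : x < Rs / ζ := by
          have e : Rs + (1 - ζ) * (Rs / ζ) = Rs / ζ := by field_simp; ring
          have h5 : (1 - ζ) * F / ρ < (1 - ζ) * (Rs / ζ) := by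
            rw [mul_div_assoc]
            exact mul_lt_mul_of_pos_left h4 h1ζ
          rw [hx]; linarith
        have hBle : Rinv x ≤ B := by
          refine hle_of_Rle _ (hinv_nonneg x hx0) ?_
          rw [hRx]; exact le_of_lt (lt_of_lt_of_le hxlt h2)
        have hRsx : Rs ≤ x := by
          have : 0 ≤ (1 - ζ) * F / ρ := by positivity
          rw [hx]; linarith
        have hFx : ¬ F / ρ < (x - Rs) / (1 - ζ) := by
          have : F / ρ = (x - Rs) / (1 - ζ) := by rw [hx]; field_simp; ring
          rw [← this]; exact lt_irrefl _
        refine ⟨hBle, le_refl Rs, le_refl F, ?_, ?_, ?_, ?_, ?_⟩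
        · rw [hRx]; exact hRsx
        · rw [hRx]; exact le_of_lt hxlt
        · rw [hRx, hx]; field_simp; ring
        · have e1 : Topt D ρ ζ (R (Rinv x)) Rs F = D / x := by
            simp only [Topt, hRx, if_neg (not_lt.2 hRsx), if_pos hxlt, if_neg hFx]
          have e2 : Topt D ρ ζ (R B) Rs F = D * ρ / (F * (1 - ζ) + ρ * Rs) := by
            simp only [Topt, if_neg (not_lt.2 h1), if_neg (not_lt.2 h2), if_pos h4]
          rw [e1, e2]
          apply le_of_eq
          have hden : 0 < F * (1 - ζ) + ρ * Rs :=
            add_pos_of_nonneg_of_pos (mul_nonneg hF h1ζ.le) (mul_pos hρ hRs)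
          have hxpos : 0 < x := lt_of_lt_of_le hRs hRsx
          rw [div_eq_div_iff hxpos.ne' hden.ne', hx]
          field_simp
          ring
        · simp only [Vopt, hRx, if_neg (not_lt.2 hRsx), if_pos hxlt, if_neg hFx]
      · -- case 5
        push_neg at h4
        simp only [if_neg (not_lt.2 h1), if_neg (not_lt.2 h2), if_neg (not_lt.2 h4)]
        have hx0 : (0:ℝ) ≤ Rs / ζ := by positivity
        have hRx : R (Rinv (Rs / ζ)) = Rs / ζ := hinv_right _ hx0
        have hBle : Rinv (Rs / ζ) ≤ B := by
          refine hle_of_Rle _ (hinv_nonneg _ hx0) ?_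
          rw [hRx]; exact h2
        have hF'le : ρ * Rs / ζ ≤ F := by
          rw [div_le_iff₀ hζ0]
          rw [div_le_div_iff₀ hζ0 hρ] at h4
          nlinarith
        have hcc : ¬ ρ * Rs / ζ / ρ < Rs / ζ := by
          have : ρ * Rs / ζ / ρ = Rs / ζ := by field_simp
          rw [this]; exact lt_irrefl _
        refine ⟨hBle, le_refl Rs, hF'le, ?_, ?_, ?_, ?_, ?_⟩
        · rw [hRx]; exact le_of_lt hRsζ
        · rw [hRx]
        · rw [hRx]; field_simp
        · simp only [Topt, hRx, if_neg (not_lt.2 (le_of_lt hRsζ)), if_neg (lt_irrefl (Rs / ζ)),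
            if_neg hcc, if_neg (not_lt.2 h1), if_neg (not_lt.2 h2), if_neg (not_lt.2 h4), le_refl]
        · have hζR : ζ * (Rs / ζ) - Rs = 0 := by field_simp; ring
          simp only [Vopt, hRx, if_neg (not_lt.2 (le_of_lt hRsζ)), if_neg (lt_irrefl (Rs / ζ)),
            if_neg hcc]
          rw [hζR]
          simp

end
end
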